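/- arXiv:2410.14902 — 6 statements merged into one kernel-verified Lean document; each statement's English description precedes it below -/
import Mathlib

section
/- The set of points of the geostationary orbit visible from the terminal, {x ∈ C_G : ⟪x − t, t⟫ ≥ 0}, is nonempty if and only if R_G·cos φ ≥ r_E, i.e., if and only if |φ| ≤ φ_inv := arccos(r_E / (r_E + a_G)). In particular, a terminal at latitude |φ| > φ_inv sees no GEO satellite. -/
open Real
open scoped RealInnerProductSpace

/-- The set of points of the geostationary orbit visible from the terminal at latitude `φ`
is nonempty iff `R_G·cos φ ≥ r_E`, equivalently iff `|φ| ≤ arccos(r_E/(r_E + a_G))`. -/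
theorem geo_visible_nonempty_iff
    (r_E a_G φ : ℝ) (hr : 0 < r_E) (ha : 0 < a_G)
    (hφ : φ ∈ Set.Ioo (-(π / 2)) (π / 2))
    (R_G : ℝ) (hR : R_G = r_E + a_G)
    (C_G : Set (EuclideanSpace ℝ (Fin 3)))
    (hC : C_G = {x : EuclideanSpace ℝ (Fin 3) | ‖x‖ = R_G ∧ x 2 = 0})
    (t : EuclideanSpace ℝ (Fin 3))
    (ht : t = ![r_E * Real.cos φ, 0, r_E * Real.sin φ]) :
    ({x ∈ C_G | ⟪x - t, t⟫ ≥ 0}.Nonempty ↔ R_G * Real.cos φ ≥ r_E) ∧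
      ({x ∈ C_G | ⟪x - t, t⟫ ≥ 0}.Nonempty ↔
        |φ| ≤ Real.arccos (r_E / (r_E + a_G))) := by
  have hcos : 0 < Real.cos φ := Real.cos_pos_of_mem_Ioo hφ
  have hRpos : 0 < R_G := by rw [hR]; linarith
  have hpyth := Real.sin_sq_add_cos_sq φ
  have hr2 : r_E ^ 2 * (Real.sin φ ^ 2 + Real.cos φ ^ 2) = r_E ^ 2 := by
    rw [hpyth]; ring
  have habs : |φ| < π / 2 := abs_lt.mpr ⟨hφ.1, hφ.2⟩
  have h1 : ({x ∈ C_G | ⟪x - t, t⟫ ≥ 0}.Nonempty ↔ R_G * Real.cos φ ≥ r_E) := by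
    constructor
    · rintro ⟨x, hxC, hxv⟩
      rw [hC] at hxC
      obtain ⟨hxn, hx2⟩ := hxC
      have hsum : x 0 ^ 2 + x 1 ^ 2 + x 2 ^ 2 = R_G ^ 2 := by
        have : ‖x‖ ^ 2 = R_G ^ 2 := by rw [hxn]
        rw [EuclideanSpace.norm_eq] at this
        rw [← this, Real.sq_sqrt (by positivity)]
        simp [Fin.sum_univ_three, sq]
      have hx0 : x 0 ≤ R_G := by nlinarith [sq_nonneg (x 1), sq_nonneg (x 2)]
      have hinner : (x 0 - r_E * Real.cos φ) * (r_E * Real.cos φ)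
          + (x 1 - 0) * 0 + (x 2 - r_E * Real.sin φ) * (r_E * Real.sin φ) ≥ 0 := by
        have hxv' := hxv
        simp [ht, PiLp.inner_apply, RCLike.inner_apply, Fin.sum_univ_three] at hxv'
        linarith
      rw [hx2] at hinner
      have hkey : r_E * r_E ≤ (x 0 * Real.cos φ) * r_E := by nlinarith [hr2]
      have hkey2 : r_E ≤ x 0 * Real.cos φ := le_of_mul_le_mul_right hkey hr
      have := mul_le_mul_of_nonneg_right hx0 hcos.le
      linarith
    · intro hge
      refine ⟨(WithLp.equiv 2 (Fin 3 → ℝ)).symm ![R_G, 0, 0], ?_, ?_⟩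
      · rw [hC]
        constructor
        · rw [EuclideanSpace.norm_eq]
          simp [Fin.sum_univ_three]
          rw [Real.sqrt_eq_iff_eq_sq] <;> nlinarith
        · simp
      · have : ⟪(WithLp.equiv 2 (Fin 3 → ℝ)).symm ![R_G, 0, 0] - t, t⟫
            = (R_G - r_E * Real.cos φ) * (r_E * Real.cos φ)
              + (0 - 0) * 0 + (0 - r_E * Real.sin φ) * (r_E * Real.sin φ) := by
          simp [ht, PiLp.inner_apply, RCLike.inner_apply, Fin.sum_univ_three]
          ring
        rw [this]
        nlinarith [hr2, mul_le_mul_of_nonneg_left hge hr.le]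
  have hc0 : 0 < r_E / (r_E + a_G) := by positivity
  have hc1 : r_E / (r_E + a_G) < 1 := by
    rw [div_lt_one (by linarith)]; linarith
  have hcmem : r_E / (r_E + a_G) ∈ Set.Icc (-1 : ℝ) 1 := ⟨by linarith, hc1.le⟩
  have h2 : (R_G * Real.cos φ ≥ r_E ↔ |φ| ≤ Real.arccos (r_E / (r_E + a_G))) := by
    constructor
    · intro hge
      have hcφ : r_E / (r_E + a_G) ≤ Real.cos |φ| := by
        rw [Real.cos_abs, div_le_iff₀ (by linarith)]
        nlinarith [hR]
      have hcφmem : Real.cos |φ| ∈ Set.Icc (-1 : ℝ) 1 :=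
        ⟨Real.neg_one_le_cos _, Real.cos_le_one _⟩
      have := Real.strictAntiOn_arccos.antitoneOn hcmem hcφmem hcφ
      rwa [Real.arccos_cos (abs_nonneg φ) (by nlinarith [Real.pi_pos])] at this
    · intro hle
      have harc : Real.arccos (r_E / (r_E + a_G)) ≤ π := Real.arccos_le_pi _
      have : Real.cos (Real.arccos (r_E / (r_E + a_G))) ≤ Real.cos |φ| :=
        Real.cos_le_cos_of_nonneg_of_le_pi (abs_nonneg φ) harc hle
      rw [Real.cos_arccos (by linarith) hc1.le, Real.cos_abs] at this
      rw [hR, ge_iff_le, ← div_le_iff₀' (by linarith)]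
      exact this
  exact ⟨h1, h1.trans h2⟩
end

section
/- Assume R_G·cos φ ≥ r_E. Then the one-dimensional Hausdorff measure of the visible arc of the geostationary orbit equals μH¹({x ∈ C_G : ⟪x − t, t⟫ ≥ 0}) = 2·R_G·arccos(r_E / (R_G·cos φ)). (This is the arc length 2(r_E + a_G)·arccos(r_E/((r_E + a_G)cos φ)) appearing in the GEO-visible probability of Lemma 1.) -/
open Real MeasureTheory
open scoped RealInnerProductSpace
open scoped ENNReal NNReal

noncomputable section GeoArcAux

/-- circle parametrization in the plane x₂ = 0 -/
def geoArcMap (R θ : ℝ) : EuclideanSpace ℝ (Fin 3) :=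
  WithLp.toLp 2 ![R * Real.cos θ, R * Real.sin θ, 0]

lemma geoArcMap_apply (R θ : ℝ) :
    geoArcMap R θ 0 = R * Real.cos θ ∧ geoArcMap R θ 1 = R * Real.sin θ ∧
      geoArcMap R θ 2 = 0 := ⟨rfl, rfl, rfl⟩

lemma geoArc_dist (R a b : ℝ) (hR : 0 ≤ R) :
    dist (geoArcMap R a) (geoArcMap R b) ≤ R * |a - b| := by
  rw [EuclideanSpace.dist_eq]
  simp only [Real.dist_eq, sq_abs]
  have h1 : ∑ i, (geoArcMap R a i - geoArcMap R b i) ^ 2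
      = R ^ 2 * (2 - 2 * Real.cos (a - b)) := by
    rw [Fin.sum_univ_three]
    show (R * Real.cos a - R * Real.cos b) ^ 2 + (R * Real.sin a - R * Real.sin b) ^ 2
        + ((0:ℝ) - 0) ^ 2 = _
    rw [Real.cos_sub]
    nlinarith [Real.sin_sq_add_cos_sq a, Real.sin_sq_add_cos_sq b]
  have h2 : 2 - 2 * Real.cos (a - b) ≤ (a - b) ^ 2 := by
    have := Real.sin_sq_le_sq (x := (a - b) / 2)
    have hc : Real.cos (a - b) = 1 - 2 * Real.sin ((a - b) / 2) ^ 2 := by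
      have h := Real.cos_two_mul ((a - b) / 2)
      rw [mul_div_cancel₀ _ (two_ne_zero)] at h
      have := Real.sin_sq_add_cos_sq ((a - b) / 2)
      nlinarith
    nlinarith
  calc Real.sqrt (∑ i, (geoArcMap R a i - geoArcMap R b i) ^ 2)
      ≤ Real.sqrt ((R * |a - b|) ^ 2) := by
        apply Real.sqrt_le_sqrt
        rw [h1, mul_pow, sq_abs]
        nlinarith [sq_nonneg R]
    _ = R * |a - b| := Real.sqrt_sq (by positivity)

lemma geoArc_lipschitz (R : ℝ) (hR : 0 ≤ R) :
    LipschitzWith R.toNNReal (geoArcMap R) := by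
  apply LipschitzWith.of_dist_le_mul
  intro a b
  have := geoArc_dist R a b hR
  simpa [Real.coe_toNNReal R hR, Real.dist_eq] using this


/-- rotation about the x₂ axis by angle β -/
def geoRot (β : ℝ) (x : EuclideanSpace ℝ (Fin 3)) : EuclideanSpace ℝ (Fin 3) :=
  WithLp.toLp 2 ![Real.cos β * x 0 - Real.sin β * x 1, Real.sin β * x 0 + Real.cos β * x 1, x 2]

lemma geoRot_isometry (β : ℝ) : Isometry (geoRot β) := by
  apply Isometry.of_dist_eq
  intro x y
  rw [EuclideanSpace.dist_eq, EuclideanSpace.dist_eq]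
  simp only [Real.dist_eq, sq_abs]
  congr 1
  rw [Fin.sum_univ_three, Fin.sum_univ_three]
  show (Real.cos β * x 0 - Real.sin β * x 1 - (Real.cos β * y 0 - Real.sin β * y 1)) ^ 2
      + (Real.sin β * x 0 + Real.cos β * x 1 - (Real.sin β * y 0 + Real.cos β * y 1)) ^ 2
      + (x 2 - y 2) ^ 2 = _
  have := Real.sin_sq_add_cos_sq β
  ring_nf
  nlinarith [Real.sin_sq_add_cos_sq β, sq_nonneg (x 0 - y 0), sq_nonneg (x 1 - y 1)]

lemma geoRot_arcMap (β R θ : ℝ) : geoRot β (geoArcMap R θ) = geoArcMap R (β + θ) := by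
  ext i
  fin_cases i <;>
    simp [geoRot, geoArcMap, Real.cos_add, Real.sin_add] <;> ring

lemma geoArc_injOn (R : ℝ) (hR : 0 < R) :
    Set.InjOn (geoArcMap R) (Set.Icc (-(π/2)) (π/2)) := by
  intro a ha b hb hab
  have h1 : geoArcMap R a 1 = geoArcMap R b 1 := by rw [hab]
  have : Real.sin a = Real.sin b := by
    have : R * Real.sin a = R * Real.sin b := h1
    exact mul_left_cancel₀ hR.ne' this
  calc a = Real.arcsin (Real.sin a) := (Real.arcsin_sin ha.1 ha.2).symm
    _ = Real.arcsin (Real.sin b) := by rw [this]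
    _ = b := Real.arcsin_sin hb.1 hb.2

lemma geoArc_image (R γ : ℝ) (hR : 0 < R) (hγ0 : 0 ≤ γ) (hγ : γ ≤ π/2) :
    geoArcMap R '' Set.Icc (-γ) γ
      = {x : EuclideanSpace ℝ (Fin 3) | ‖x‖ = R ∧ x 2 = 0 ∧ R * Real.cos γ ≤ x 0} := by
  ext x
  constructor
  · rintro ⟨θ, hθ, rfl⟩
    refine ⟨?_, rfl, ?_⟩
    · rw [EuclideanSpace.norm_eq, Fin.sum_univ_three]
      show Real.sqrt (‖R * Real.cos θ‖^2 + ‖R * Real.sin θ‖^2 + ‖(0:ℝ)‖^2) = R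
      rw [show ‖R * Real.cos θ‖^2 + ‖R * Real.sin θ‖^2 + ‖(0:ℝ)‖^2 = R^2 by
        simp only [norm_mul, Real.norm_eq_abs, norm_zero, mul_pow, sq_abs]
        nlinarith [Real.sin_sq_add_cos_sq θ]]
      exact Real.sqrt_sq hR.le
    · show R * Real.cos γ ≤ R * Real.cos θ
      have h1 : Real.cos θ = Real.cos |θ| := (Real.cos_abs θ).symm
      have h2 : |θ| ≤ γ := abs_le.2 ⟨hθ.1, hθ.2⟩
      have : Real.cos γ ≤ Real.cos |θ| :=
        Real.cos_le_cos_of_nonneg_of_le_pi (abs_nonneg θ) (by linarith [Real.pi_pos]) h2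
      nlinarith
  · rintro ⟨hn, h2, h0⟩
    have hcγ : 0 ≤ Real.cos γ := Real.cos_nonneg_of_mem_Icc ⟨by linarith, hγ⟩
    have hx0 : 0 ≤ x 0 := le_trans (by positivity) h0
    have hsum : x 0 ^ 2 + x 1 ^ 2 = R ^ 2 := by
      have := congrArg (· ^ 2) hn
      rw [EuclideanSpace.norm_eq, Fin.sum_univ_three] at this
      simp only [Real.norm_eq_abs, sq_abs, h2] at this
      rw [Real.sq_sqrt (by positivity)] at this
      simpa using this
    have hx1R : |x 1 / R| ≤ 1 := by
      rw [abs_div, abs_of_pos hR, div_le_one hR]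
      nlinarith [abs_nonneg (x 1), sq_abs (x 1), sq_nonneg (x 0)]
    set θ := Real.arcsin (x 1 / R) with hθdef
    have hsin : Real.sin θ = x 1 / R := Real.sin_arcsin (by linarith [abs_le.1 hx1R]) (abs_le.1 hx1R).2
    have hcos : Real.cos θ = x 0 / R := by
      rw [hθdef, Real.cos_arcsin]
      rw [show 1 - (x 1 / R)^2 = (x 0 / R)^2 by field_simp; nlinarith]
      exact Real.sqrt_sq (by positivity)
    refine ⟨θ, ?_, ?_⟩
    · have hθmem : θ ∈ Set.Icc (-(π/2)) (π/2) :=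
        ⟨Real.neg_pi_div_two_le_arcsin _, Real.arcsin_le_pi_div_two _⟩
      have habs : |θ| ≤ γ := by
        have hcθ : Real.cos γ ≤ Real.cos θ := by
          rw [hcos, le_div_iff₀ hR]
          nlinarith
        have h1 : |θ| = Real.arccos (Real.cos θ) := by
          rw [← Real.cos_abs θ]
          exact (Real.arccos_cos (abs_nonneg θ) (by
            rcases abs_le.1 (abs_le.2 ⟨hθmem.1, hθmem.2⟩ : |θ| ≤ π/2) with ⟨_, h⟩
            linarith [Real.pi_pos, abs_le.2 ⟨hθmem.1, hθmem.2⟩])).symm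
        have h2 : γ = Real.arccos (Real.cos γ) :=
          (Real.arccos_cos hγ0 (by linarith [Real.pi_pos])).symm
        rw [h1, h2]
        simp only [Real.arccos]
        have := Real.monotone_arcsin hcθ
        linarith
      exact ⟨by linarith [(abs_le.1 habs).1], (abs_le.1 habs).2⟩
    · ext i
      fin_cases i
      · show R * Real.cos θ = x 0
        rw [hcos]; field_simp
      · show R * Real.sin θ = x 1
        rw [hsin]; field_simp
      · exact h2.symm


lemma geoProj_lipschitz : LipschitzWith 1 (fun x : EuclideanSpace ℝ (Fin 3) => x 1) := by
  apply LipschitzWith.of_dist_le_mul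
  intro x y
  rw [NNReal.coe_one, one_mul, EuclideanSpace.dist_eq, Real.dist_eq]
  rw [← Real.sqrt_sq_eq_abs]
  apply Real.sqrt_le_sqrt
  rw [Fin.sum_univ_three]
  have h0 := sq_nonneg (dist (x 0) (y 0))
  have h2 := sq_nonneg (dist (x 2) (y 2))
  have : dist (x 1) (y 1) ^ 2 = (x 1 - y 1) ^ 2 := by rw [Real.dist_eq, sq_abs]
  linarith

lemma geoArc_centered_lower (R γ : ℝ) (hR : 0 < R) (hγ0 : 0 ≤ γ) (hγ : γ ≤ π/2) :
    ENNReal.ofReal (2 * R * Real.sin γ) ≤ μH[1] (geoArcMap R '' Set.Icc (-γ) γ) := by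
  have hsγ : Real.sin γ ≤ 1 := Real.sin_le_one γ
  have hsγ0 : 0 ≤ Real.sin γ := Real.sin_nonneg_of_nonneg_of_le_pi hγ0 (by linarith [Real.pi_pos])
  have hsub : Set.Icc (-(R * Real.sin γ)) (R * Real.sin γ)
      ⊆ (fun x : EuclideanSpace ℝ (Fin 3) => x 1) '' (geoArcMap R '' Set.Icc (-γ) γ) := by
    intro y hy
    have hyabs : |y / R| ≤ Real.sin γ := by
      rw [abs_div, abs_of_pos hR, div_le_iff₀ hR]
      rw [abs_le]
      constructor <;> nlinarith [hy.1, hy.2]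
    have hy1 : |y / R| ≤ 1 := le_trans hyabs hsγ
    refine ⟨geoArcMap R (Real.arcsin (y / R)), ⟨Real.arcsin (y / R), ?_, rfl⟩, ?_⟩
    · constructor
      · have : Real.arcsin (-(Real.sin γ)) ≤ Real.arcsin (y / R) :=
          Real.monotone_arcsin (by linarith [(abs_le.1 hyabs).1])
        rwa [← Real.sin_neg, Real.arcsin_sin (by linarith) (by linarith)] at this
      · have : Real.arcsin (y / R) ≤ Real.arcsin (Real.sin γ) :=
          Real.monotone_arcsin (abs_le.1 hyabs).2
        rwa [Real.arcsin_sin (by linarith) hγ] at this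
    · show R * Real.sin (Real.arcsin (y / R)) = y
      rw [Real.sin_arcsin (by linarith [(abs_le.1 hy1).1]) (abs_le.1 hy1).2]
      field_simp
  calc ENNReal.ofReal (2 * R * Real.sin γ)
      = volume (Set.Icc (-(R * Real.sin γ)) (R * Real.sin γ)) := by
        rw [Real.volume_Icc]; congr 1; ring
    _ = μH[1] (Set.Icc (-(R * Real.sin γ)) (R * Real.sin γ)) := by
        rw [MeasureTheory.hausdorffMeasure_real]
    _ ≤ μH[1] ((fun x : EuclideanSpace ℝ (Fin 3) => x 1) '' (geoArcMap R '' Set.Icc (-γ) γ)) :=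
        measure_mono hsub
    _ ≤ μH[1] (geoArcMap R '' Set.Icc (-γ) γ) := by
        have := geoProj_lipschitz.hausdorffMeasure_image_le (d := 1) one_pos.le
          (geoArcMap R '' Set.Icc (-γ) γ)
        simpa using this


lemma geoArc_measure (R d : ℝ) (hR : 0 < R) (hd0 : 0 < d) (hdR : d ≤ R) :
    μH[1] {x : EuclideanSpace ℝ (Fin 3) | ‖x‖ = R ∧ x 2 = 0 ∧ d ≤ x 0}
      = ENNReal.ofReal (2 * R * Real.arccos (d / R)) := by
  set α := Real.arccos (d / R) with hα
  have hdR1 : d / R ≤ 1 := (div_le_one hR).2 hdR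
  have hdR0 : 0 ≤ d / R := by positivity
  have hα0 : 0 ≤ α := Real.arccos_nonneg _
  have hαπ : α ≤ π / 2 := Real.arccos_le_pi_div_two.2 hdR0
  have hcosα : Real.cos α = d / R := Real.cos_arccos (by linarith) hdR1
  have hRcos : R * Real.cos α = d := by rw [hcosα]; field_simp
  have hset : {x : EuclideanSpace ℝ (Fin 3) | ‖x‖ = R ∧ x 2 = 0 ∧ d ≤ x 0}
      = geoArcMap R '' Set.Icc (-α) α := by
    rw [geoArc_image R α hR hα0 hαπ, hRcos]
  rw [hset]
  -- upper bound
  have hupper : μH[1] (geoArcMap R '' Set.Icc (-α) α) ≤ ENNReal.ofReal (2 * R * α) := by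
    calc μH[1] (geoArcMap R '' Set.Icc (-α) α)
        ≤ (R.toNNReal : ℝ≥0∞) ^ (1:ℝ) * μH[1] (Set.Icc (-α) α) :=
          (geoArc_lipschitz R hR.le).hausdorffMeasure_image_le one_pos.le _
      _ = ENNReal.ofReal R * volume (Set.Icc (-α) α) := by
          rw [ENNReal.rpow_one, MeasureTheory.hausdorffMeasure_real]; rfl
      _ = ENNReal.ofReal R * ENNReal.ofReal (2 * α) := by
          rw [Real.volume_Icc]; congr 1; ring
      _ = ENNReal.ofReal (2 * R * α) := by
          rw [← ENNReal.ofReal_mul hR.le]; congr 1; ring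
  -- lower bound
  have hlower : ENNReal.ofReal (2 * R * α) ≤ μH[1] (geoArcMap R '' Set.Icc (-α) α) := by
    rcases eq_or_lt_of_le hα0 with h0 | hαpos
    · simp [← h0]
    -- piecewise bound for each n
    have key : ∀ n : ℕ, 1 ≤ n →
        ENNReal.ofReal ((n : ℝ) * (2 * R * Real.sin (α / n)))
          ≤ μH[1] (geoArcMap R '' Set.Icc (-α) α) := by
      intro n hn
      have hnR : (0:ℝ) < n := by exact_mod_cast hn
      set δ : ℝ := α / n with hδ
      have hδ0 : 0 < δ := by positivity
      have hn1 : (1:ℝ) ≤ n := by exact_mod_cast hn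
      have hδα : δ ≤ α := by
        rw [hδ, div_le_iff₀ hnR]
        nlinarith [hαpos]
      set T : ℕ → Set (EuclideanSpace ℝ (Fin 3)) := fun i =>
        geoArcMap R '' Set.Icc (-α + i * (2 * δ)) (-α + (i + 1) * (2 * δ)) with hT
      -- each piece inside Icc (-α) α for i < n
      have hIccsub : ∀ i : ℕ, i < n →
          Set.Icc (-α + i * (2 * δ)) (-α + (i + 1) * (2 * δ)) ⊆ Set.Icc (-α) α := by
        intro i hi
        apply Set.Icc_subset_Icc
        · nlinarith [Nat.cast_nonneg (α := ℝ) i]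
        · have : ((i:ℝ) + 1) ≤ n := by exact_mod_cast hi
          have h2 : ((i:ℝ) + 1) * (2 * δ) ≤ n * (2 * δ) := by nlinarith
          have h3 : (n:ℝ) * (2 * δ) = 2 * α := by
            rw [hδ]; field_simp
          linarith
      have hTsub : ∀ i ∈ Finset.range n, T i ⊆ geoArcMap R '' Set.Icc (-α) α := by
        intro i hi
        exact Set.image_mono (hIccsub i (Finset.mem_range.1 hi))
      -- each piece has measure ≥ ofReal (2 R sin δ)
      have hpiece : ∀ i : ℕ, ENNReal.ofReal (2 * R * Real.sin δ) ≤ μH[1] (T i) := by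
        intro i
        have hrot : T i = geoRot (-α + i * (2 * δ) + δ) '' (geoArcMap R '' Set.Icc (-δ) δ) := by
          rw [hT]
          simp only [Set.image_image, geoRot_arcMap]
          rw [show (fun θ => geoArcMap R (-α + i * (2 * δ) + δ + θ)) =
              (geoArcMap R) ∘ (fun θ => (-α + i * (2 * δ) + δ) + θ) from rfl]
          rw [Set.image_comp]
          congr 1
          rw [Set.image_const_add_Icc]
          congr 1 <;> ring
        rw [hrot, (geoRot_isometry _).hausdorffMeasure_image (Or.inl one_pos.le)]
        exact geoArc_centered_lower R δ hR hδ0.le (le_trans hδα hαπ)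
      -- pieces are a.e. disjoint
      have hInj := (geoArc_injOn R hR).mono
        (Set.Icc_subset_Icc (by linarith) (by linarith) : Set.Icc (-α) α ⊆ _)
      have hker : ∀ i j : ℕ, i < n → j < n → i < j →
          MeasureTheory.AEDisjoint μH[1] (T i) (T j) := by
        intro i j hi hj hlt
        have hsub1 := hIccsub i hi
        have hsub2 := hIccsub j hj
        have hInter : T i ∩ T j
            = geoArcMap R '' (Set.Icc (-α + i * (2 * δ)) (-α + (i + 1) * (2 * δ))
              ∩ Set.Icc (-α + j * (2 * δ)) (-α + (j + 1) * (2 * δ))) := by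
          rw [hT]
          exact (Set.InjOn.image_inter hInj hsub1 hsub2).symm
        have hIccInter : Set.Icc (-α + i * (2 * δ)) (-α + (i + 1) * (2 * δ))
            ∩ Set.Icc (-α + j * (2 * δ)) (-α + (j + 1) * (2 * δ))
            ⊆ {(-α + j * (2 * δ) : ℝ)} := by
          intro x hx
          have h1 := hx.1.2
          have h2 := hx.2.1
          have : ((i:ℝ) + 1) ≤ j := by exact_mod_cast hlt
          have : (-α + (i + 1) * (2 * δ) : ℝ) ≤ -α + j * (2 * δ) := by nlinarith
          simp only [Set.mem_singleton_iff]
          linarith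
        have : μH[1] (T i ∩ T j) ≤ μH[1] ({geoArcMap R (-α + j * (2 * δ))}) := by
          apply measure_mono
          rw [hInter]
          intro x hx
          rcases hx with ⟨θ, hθ, rfl⟩
          simp only [Set.mem_singleton_iff]
          rw [hIccInter hθ]
        have hsing : μH[1] ({geoArcMap R (-α + j * (2 * δ))} :
            Set (EuclideanSpace ℝ (Fin 3))) = 0 := by
          haveI := MeasureTheory.Measure.noAtoms_hausdorff
            (EuclideanSpace ℝ (Fin 3)) (d := 1) one_pos
          exact measure_singleton _
        exact le_antisymm (hsing ▸ this) zero_le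
      have hdisj : (↑(Finset.range n) : Set ℕ).Pairwise
          (Function.onFun (MeasureTheory.AEDisjoint μH[1]) T) := by
        intro i hi j hj hij
        simp only [Finset.coe_range, Set.mem_Iio] at hi hj
        rcases hij.lt_or_gt with h | h
        · exact hker i j hi hj h
        · exact (hker j i hj hi h).symm
      -- measurability
      have hmeas : ∀ i ∈ Finset.range n, NullMeasurableSet (T i) μH[1] := by
        intro i _
        have hcont : Continuous (geoArcMap R) := (geoArc_lipschitz R hR.le).continuous
        have : IsCompact (T i) := (isCompact_Icc).image hcont
        exact this.isClosed.measurableSet.nullMeasurableSet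
      calc ENNReal.ofReal ((n : ℝ) * (2 * R * Real.sin (α / n)))
          = ∑ _i ∈ Finset.range n, ENNReal.ofReal (2 * R * Real.sin δ) := by
            rw [← hδ, Finset.sum_const, Finset.card_range, nsmul_eq_mul,
              ← ENNReal.ofReal_natCast n, ← ENNReal.ofReal_mul (by positivity)]
        _ ≤ ∑ i ∈ Finset.range n, μH[1] (T i) := Finset.sum_le_sum fun i _ => hpiece i
        _ = μH[1] (⋃ i ∈ Finset.range n, T i) :=
            (MeasureTheory.measure_biUnion_finset₀ hdisj hmeas).symm
        _ ≤ μH[1] (geoArcMap R '' Set.Icc (-α) α) := by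
            apply measure_mono
            exact Set.iUnion₂_subset hTsub
    -- limit
    have hlim : Filter.Tendsto (fun n : ℕ => ENNReal.ofReal ((n : ℝ) * (2 * R * Real.sin (α / n))))
        Filter.atTop (nhds (ENNReal.ofReal (2 * R * α))) := by
      apply ENNReal.tendsto_ofReal
      have hslope : Filter.Tendsto (fun x : ℝ => Real.sin x / x) (nhdsWithin 0 {0}ᶜ) (nhds 1) := by
        have h := (Real.hasDerivAt_sin 0)
        rw [Real.cos_zero] at h
        have := hasDerivAt_iff_tendsto_slope.1 h
        apply this.congr
        intro x
        rw [slope_def_field, Real.sin_zero]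
        simp [div_eq_mul_inv]
      have hseq : Filter.Tendsto (fun n : ℕ => α / n) Filter.atTop (nhdsWithin 0 {0}ᶜ) := by
        rw [tendsto_nhdsWithin_iff]
        constructor
        · exact tendsto_const_div_atTop_nhds_zero_nat α
        · filter_upwards [Filter.eventually_ge_atTop 1] with n hn
          have hnR : (0:ℝ) < n := by exact_mod_cast hn
          simp only [Set.mem_compl_iff, Set.mem_singleton_iff]
          positivity
      have h1 : Filter.Tendsto (fun n : ℕ => Real.sin (α / n) / (α / n))
          Filter.atTop (nhds 1) := hslope.comp hseq
      have h2 := h1.const_mul (2 * R * α)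
      rw [mul_one] at h2
      apply h2.congr'
      filter_upwards [Filter.eventually_ge_atTop 1] with n hn
      have hnR : (0:ℝ) < n := by exact_mod_cast hn
      field_simp
    exact le_of_tendsto hlim (Filter.eventually_atTop.2 ⟨1, fun n hn => key n hn⟩)
  exact le_antisymm hupper hlower

end GeoArcAux

/-- When `R_G·cos φ ≥ r_E`, the one-dimensional Hausdorff measure (arc length) of the
visible arc of the geostationary orbit equals `2·R_G·arccos(r_E/(R_G·cos φ))`. -/
theorem hausdorff_measure_geo_visible_arc
    (r_E a_G φ : ℝ) (hr : 0 < r_E) (ha : 0 < a_G)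
    (hφ : φ ∈ Set.Ioo (-(π / 2)) (π / 2))
    (R_G : ℝ) (hR : R_G = r_E + a_G)
    (hvis : R_G * Real.cos φ ≥ r_E)
    (C_G : Set (EuclideanSpace ℝ (Fin 3)))
    (hC : C_G = {x : EuclideanSpace ℝ (Fin 3) | ‖x‖ = R_G ∧ x 2 = 0})
    (t : EuclideanSpace ℝ (Fin 3))
    (ht : t = ![r_E * Real.cos φ, 0, r_E * Real.sin φ]) :
    μH[1] {x ∈ C_G | ⟪x - t, t⟫ ≥ 0} =
      ENNReal.ofReal (2 * R_G * Real.arccos (r_E / (R_G * Real.cos φ))) := by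
  have hcφ : 0 < Real.cos φ := Real.cos_pos_of_mem_Ioo hφ
  have hR0 : 0 < R_G := by rw [hR]; linarith
  set dd : ℝ := r_E / Real.cos φ with hdd
  have hd0 : 0 < dd := by positivity
  have hdR : dd ≤ R_G := by
    rw [hdd, div_le_iff₀ hcφ]; linarith
  have hset : {x ∈ C_G | ⟪x - t, t⟫ ≥ 0}
      = {x : EuclideanSpace ℝ (Fin 3) | ‖x‖ = R_G ∧ x 2 = 0 ∧ dd ≤ x 0} := by
    ext x
    subst hC
    simp only [Set.mem_setOf_eq, Set.mem_sep_iff]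
    constructor
    · rintro ⟨⟨hn, h2⟩, hinner⟩
      refine ⟨hn, h2, ?_⟩
      rw [PiLp.inner_apply, Fin.sum_univ_three] at hinner
      simp only [PiLp.sub_apply, h2] at hinner
      have ht0 : t 0
          = r_E * Real.cos φ := congrFun ht 0
      have ht1 : t 1
          = 0 := congrFun ht 1
      have ht2 : t 2
          = r_E * Real.sin φ := congrFun ht 2
      rw [ht0, ht1, ht2] at hinner
      simp only [RCLike.inner_apply, conj_trivial] at hinner
      rw [hdd, div_le_iff₀ hcφ]
      have hs := Real.sin_sq_add_cos_sq φ
      have hs2 : r_E^2 * Real.sin φ^2 + r_E^2 * Real.cos φ^2 = r_E^2 := by nlinarith [hs]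
      by_contra hcon
      push_neg at hcon
      nlinarith [hinner, hs2, mul_pos hr (sub_pos.2 hcon)]
    · rintro ⟨hn, h2, h0⟩
      refine ⟨⟨hn, h2⟩, ?_⟩
      rw [PiLp.inner_apply, Fin.sum_univ_three]
      simp only [PiLp.sub_apply, h2]
      have ht0 : t 0
          = r_E * Real.cos φ := congrFun ht 0
      have ht1 : t 1
          = 0 := congrFun ht 1
      have ht2 : t 2
          = r_E * Real.sin φ := congrFun ht 2
      rw [ht0, ht1, ht2]
      simp only [RCLike.inner_apply, conj_trivial]
      rw [hdd, div_le_iff₀ hcφ] at h0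
      have hs := Real.sin_sq_add_cos_sq φ
      have hs2 : r_E^2 * Real.sin φ^2 + r_E^2 * Real.cos φ^2 = r_E^2 := by nlinarith [hs]
      nlinarith [hs2, mul_le_mul_of_nonneg_right h0 hr.le]
  have harg : dd / R_G = r_E / (R_G * Real.cos φ) := by
    rw [hdd, div_div, mul_comm]
  rw [hset, geoArc_measure R_G dd hR0 hd0 hdR, harg]
end

section
/- Assume R_G·cos φ ≥ r_E. Then the maximum distance from the terminal t to a visible point of the geostationary orbit equals r_vis,max^G = √(a_G² + 2·a_G·r_E): every visible x ∈ C_G satisfies ‖x − t‖ ≤ √(a_G² + 2·a_G·r_E), and this value is attained by some visible point of C_G. -/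
open Real
open scoped RealInnerProductSpace

/-- When `R_G·cos φ ≥ r_E`, the maximum distance from the terminal to a visible point of
the geostationary orbit equals `r_vis,max^G = √(a_G² + 2·a_G·r_E)`: every visible point is
at distance at most this value, and the value is attained by some visible point. -/
theorem geo_max_visible_distance
    (r_E a_G φ : ℝ) (hr : 0 < r_E) (ha : 0 < a_G)
    (hφ : φ ∈ Set.Ioo (-(π / 2)) (π / 2))
    (R_G : ℝ) (hR : R_G = r_E + a_G)
    (hvis : R_G * Real.cos φ ≥ r_E)
    (C_G : Set (EuclideanSpace ℝ (Fin 3)))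
    (hC : C_G = {x : EuclideanSpace ℝ (Fin 3) | ‖x‖ = R_G ∧ x 2 = 0})
    (t : EuclideanSpace ℝ (Fin 3))
    (ht : t = ![r_E * Real.cos φ, 0, r_E * Real.sin φ]) :
    (∀ x ∈ C_G, ⟪x - t, t⟫ ≥ 0 →
        ‖x - t‖ ≤ Real.sqrt (a_G ^ 2 + 2 * a_G * r_E)) ∧
      (∃ x ∈ C_G, ⟪x - t, t⟫ ≥ 0 ∧
        ‖x - t‖ = Real.sqrt (a_G ^ 2 + 2 * a_G * r_E)) := by
  have hcos : 0 < Real.cos φ := Real.cos_pos_of_mem_Ioo hφ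
  have hRpos : 0 < R_G := by rw [hR]; linarith
  have hK : (0:ℝ) ≤ a_G ^ 2 + 2 * a_G * r_E := by positivity
  have htt : ⟪t, t⟫ = r_E ^ 2 := by
    rw [PiLp.inner_apply]
    simp [Fin.sum_univ_three, ht]
    nlinarith [Real.sin_sq_add_cos_sq φ]
  have htn : ‖t‖ ^ 2 = r_E ^ 2 := by
    rw [← real_inner_self_eq_norm_sq]; exact htt
  constructor
  · intro x hx hvx
    rw [hC] at hx
    obtain ⟨hxn, _⟩ := hx
    have hin : ⟪x, t⟫ - ⟪t, t⟫ ≥ 0 := by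
      rw [← inner_sub_left]; exact hvx
    have hxt : ⟪x, t⟫ ≥ r_E ^ 2 := by linarith [htt ▸ hin]
    have hsq : ‖x - t‖ ^ 2 ≤ a_G ^ 2 + 2 * a_G * r_E := by
      rw [norm_sub_sq_real, hxn, htn, hR]
      nlinarith
    calc ‖x - t‖ = Real.sqrt (‖x - t‖ ^ 2) := (Real.sqrt_sq (norm_nonneg _)).symm
      _ ≤ Real.sqrt (a_G ^ 2 + 2 * a_G * r_E) := Real.sqrt_le_sqrt hsq
  · set c := r_E / Real.cos φ with hc
    have hcpos : 0 < c := div_pos hr hcos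
    have hcR : c ≤ R_G := by
      rw [hc, div_le_iff₀ hcos]; linarith
    have hc2 : c ^ 2 ≤ R_G ^ 2 := by nlinarith
    set s := Real.sqrt (R_G ^ 2 - c ^ 2) with hs
    have hs2 : s ^ 2 = R_G ^ 2 - c ^ 2 := Real.sq_sqrt (by linarith)
    set x : EuclideanSpace ℝ (Fin 3) := WithLp.toLp 2 ![c, s, 0] with hxdef
    have hxn : ‖x‖ = R_G := by
      have : ‖x‖ = Real.sqrt (∑ i : Fin 3, ‖x i‖ ^ 2) := EuclideanSpace.norm_eq x
      rw [this]
      have : ∑ i : Fin 3, ‖x i‖ ^ 2 = R_G ^ 2 := by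
        simp [hxdef, Fin.sum_univ_three, Real.norm_eq_abs, sq_abs]
        nlinarith
      rw [this, Real.sqrt_sq hRpos.le]
    have hxt : ⟪x, t⟫ = r_E ^ 2 := by
      simp [hxdef, PiLp.inner_apply, Fin.sum_univ_three, ht]
      field_simp [hc]
      rw [hc]; field_simp [hcos.ne']
    have hvx : ⟪x - t, t⟫ ≥ 0 := by
      rw [inner_sub_left, hxt, htt]; linarith
    have hnsq : ‖x - t‖ ^ 2 = a_G ^ 2 + 2 * a_G * r_E := by
      rw [norm_sub_sq_real, hxn, htn, hxt, hR]; ring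
    refine ⟨x, ?_, hvx, ?_⟩
    · rw [hC]
      refine ⟨hxn, ?_⟩
      simp [hxdef]
    · rw [← hnsq, Real.sqrt_sq (norm_nonneg _)]
end

section
/- The function θ ↦ ‖x(θ) − t‖ is strictly increasing on [0, π], where x(θ) = (R_G cos θ, R_G sin θ, 0); hence for each distance r between the minimum ‖x(0) − t‖ and the maximum ‖x(π) − t‖ there is a unique θ(r) ∈ [0, π] with ‖x(θ(r)) − t‖ = r, and {θ ∈ [−π, π] : ‖x(θ) − t‖ ≤ r} = [−θ(r), θ(r)]. -/
open Real
open scoped RealInnerProductSpace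

/-- The distance `θ ↦ ‖x(θ) − t‖` from the terminal to the geostationary-orbit point at
longitude `θ` is strictly increasing on `[0, π]`; hence for each `r` between the minimum
`‖x(0) − t‖` and the maximum `‖x(π) − t‖` there is a unique `θ(r) ∈ [0, π]` with
`‖x(θ(r)) − t‖ = r`, and `{θ ∈ [−π, π] : ‖x(θ) − t‖ ≤ r} = [−θ(r), θ(r)]`. -/
theorem geo_distance_strictMono_and_sublevel
    (r_E a_G φ : ℝ) (hr : 0 < r_E) (ha : 0 < a_G)
    (hφ : φ ∈ Set.Ioo (-(π / 2)) (π / 2))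
    (R_G : ℝ) (hR : R_G = r_E + a_G)
    (t : EuclideanSpace ℝ (Fin 3))
    (ht : t = ![r_E * Real.cos φ, 0, r_E * Real.sin φ])
    (x : ℝ → EuclideanSpace ℝ (Fin 3))
    (hxdef : ∀ θ : ℝ, x θ = ![R_G * Real.cos θ, R_G * Real.sin θ, 0]) :
    StrictMonoOn (fun θ : ℝ => ‖x θ - t‖) (Set.Icc 0 π) ∧
      ∀ r : ℝ, ‖x 0 - t‖ ≤ r → r ≤ ‖x π - t‖ →
        ∃ θr ∈ Set.Icc (0 : ℝ) π,
          ‖x θr - t‖ = r ∧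
          (∀ θ' ∈ Set.Icc (0 : ℝ) π, ‖x θ' - t‖ = r → θ' = θr) ∧
          {θ ∈ Set.Icc (-π) π | ‖x θ - t‖ ≤ r} = Set.Icc (-θr) θr := by
  have hRpos : 0 < R_G := by rw [hR]; linarith
  have hcosφ : 0 < Real.cos φ := Real.cos_pos_of_mem_Ioo hφ
  set c : ℝ := R_G * r_E * Real.cos φ with hc
  have hcpos : 0 < c := by positivity
  have hcle : c ≤ R_G * r_E := by
    have := Real.cos_le_one φ
    nlinarith
  have hkey : ∀ θ : ℝ, ‖x θ - t‖ = Real.sqrt (R_G^2 + r_E^2 - 2*c*Real.cos θ) := by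
    intro θ
    rw [EuclideanSpace.norm_eq]; simp only [WithLp.ofLp_sub, Pi.sub_apply, ht, hxdef θ]
    congr 1
    simp [Fin.sum_univ_three]
    have h1 := Real.sin_sq_add_cos_sq θ
    have h2 := Real.sin_sq_add_cos_sq φ
    ring_nf
    nlinarith [h1, h2]
  have hnn : ∀ θ : ℝ, 0 ≤ R_G^2 + r_E^2 - 2*c*Real.cos θ := by
    intro θ
    have h1 := Real.cos_le_one θ
    have h2 := Real.neg_one_le_cos θ
    nlinarith
  have hmono : StrictMonoOn (fun θ : ℝ => ‖x θ - t‖) (Set.Icc 0 π) := by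
    intro a ha b hb hab
    simp only [hkey]
    apply Real.sqrt_lt_sqrt (hnn a)
    have hcos : Real.cos b < Real.cos a := Real.strictAntiOn_cos ha hb hab
    nlinarith
  refine ⟨hmono, fun r h0 hπ => ?_⟩
  have hcont : Continuous (fun θ : ℝ => ‖x θ - t‖) := by
    have : (fun θ : ℝ => ‖x θ - t‖)
        = fun θ => Real.sqrt (R_G^2 + r_E^2 - 2*c*Real.cos θ) := funext hkey
    rw [this]
    exact Real.continuous_sqrt.comp (by continuity)
  have hiv := intermediate_value_Icc (le_of_lt Real.pi_pos) hcont.continuousOn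
  obtain ⟨θr, hθr, hfθr⟩ := hiv ⟨h0, hπ⟩
  replace hfθr : ‖x θr - t‖ = r := hfθr
  refine ⟨θr, hθr, hfθr, fun θ' hθ' hfθ' => hmono.injOn hθ' hθr (hfθ'.trans hfθr.symm), ?_⟩
  have habs : ∀ θ : ℝ, ‖x θ - t‖ = ‖x |θ| - t‖ := by
    intro θ; rw [hkey, hkey, Real.cos_abs]
  ext θ
  simp only [Set.mem_setOf_eq, Set.mem_Icc]
  constructor
  · rintro ⟨⟨h1, h2⟩, h3⟩
    rw [← abs_le]
    by_contra hlt
    push_neg at hlt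
    have hmem : |θ| ∈ Set.Icc (0 : ℝ) π := ⟨abs_nonneg θ, abs_le.2 ⟨by linarith, h2⟩⟩
    have h4 : ‖x θr - t‖ < ‖x |θ| - t‖ := hmono hθr hmem hlt
    rw [← habs θ, hfθr] at h4
    linarith [h3, h4]
  · rintro ⟨h1, h2⟩
    have habs' : |θ| ≤ θr := abs_le.2 ⟨h1, h2⟩
    have hmem : |θ| ∈ Set.Icc (0 : ℝ) π := ⟨abs_nonneg θ, le_trans habs' hθr.2⟩
    refine ⟨⟨by linarith [hθr.2], le_trans h2 hθr.2⟩, ?_⟩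
    rw [habs θ, ← hfθr]
    rcases eq_or_lt_of_le habs' with h | h
    · rw [h]
    · exact le_of_lt (hmono hmem hθr h)
end

section
/- Let v₂ = R_G² + r_E². For every r > 0 such that −1 ≤ (v₂ − r²)/(2·R_G·r_E·cos φ) ≤ 1, the one-dimensional Hausdorff measure of the portion of the geostationary orbit within distance r of the terminal equals μH¹({x ∈ C_G : ‖x − t‖ ≤ r}) = 2·R_G·arccos((v₂ − r²)/(2·R_G·r_E·cos φ)). -/
open Real MeasureTheory Filter
open scoped RealInnerProductSpace

noncomputable def circ (R θ : ℝ) : EuclideanSpace ℝ (Fin 3) := WithLp.toLp 2 ![R * Real.cos θ, R * Real.sin θ, 0]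

lemma circ_continuous (R : ℝ) : Continuous (circ R) := by
  have : circ R = (EuclideanSpace.equiv (Fin 3) ℝ).symm ∘
      (fun θ => ![R * Real.cos θ, R * Real.sin θ, 0]) := rfl
  rw [this]
  refine (EuclideanSpace.equiv (Fin 3) ℝ).symm.continuous.comp ?_
  refine continuous_pi fun i => ?_
  fin_cases i <;> simp <;> fun_prop

lemma sin_lower {t s : ℝ} (ht : 0 ≤ t) (hts : t ≤ s) (hs : s ≤ π) :
    Real.sin s * t ≤ Real.sin t * s := by
  rcases eq_or_lt_of_le (ht.trans hts) with h | h
  · rw [← h] at hts ⊢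
    have : t = 0 := le_antisymm hts ht
    simp [this]
  · have hmem0 : (0:ℝ) ∈ Set.Icc 0 π := ⟨le_refl _, Real.pi_pos.le⟩
    have hmems : s ∈ Set.Icc 0 π := ⟨h.le, hs⟩
    have ha : (0:ℝ) ≤ 1 - t/s := by
      have : t/s ≤ 1 := by rw [div_le_one h]; exact hts
      linarith
    have hb : (0:ℝ) ≤ t/s := by positivity
    have key := strictConcaveOn_sin_Icc.concaveOn.2 hmem0 hmems ha hb (by ring)
    simp only [smul_eq_mul, mul_zero, Real.sin_zero, zero_add] at key
    have heq : t / s * s = t := by field_simp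
    rw [heq] at key
    calc Real.sin s * t = (t/s * Real.sin s) * s := by field_simp
      _ ≤ Real.sin t * s := by nlinarith

lemma chord_sq (R θ₁ θ₂ : ℝ) :
    ‖circ R θ₁ - circ R θ₂‖ = Real.sqrt (2*R^2*(1 - Real.cos (θ₁ - θ₂))) := by
  rw [EuclideanSpace.norm_eq]
  congr 1
  simp [circ, Fin.sum_univ_three, Real.cos_sub]
  ring_nf
  nlinarith [Real.sin_sq_add_cos_sq θ₁, Real.sin_sq_add_cos_sq θ₂]

lemma one_sub_cos (x : ℝ) : 1 - Real.cos x = 2 * Real.sin (x/2)^2 := by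
  have h1 : Real.cos (2 * (x/2)) = 2 * Real.cos (x/2)^2 - 1 := Real.cos_two_mul _
  have h2 := Real.sin_sq_add_cos_sq (x/2)
  have : (2:ℝ) * (x/2) = x := by ring
  rw [this] at h1
  linarith

lemma chord_eq (R θ₁ θ₂ : ℝ) (hR : 0 ≤ R) (h : |θ₁ - θ₂| ≤ 2*π) :
    ‖circ R θ₁ - circ R θ₂‖ = 2*R*Real.sin (|θ₁ - θ₂|/2) := by
  rw [chord_sq]
  have hs : 0 ≤ Real.sin (|θ₁ - θ₂|/2) :=
    Real.sin_nonneg_of_nonneg_of_le_pi (by positivity) (by linarith [abs_nonneg (θ₁ - θ₂)])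
  have : 2*R^2*(1 - Real.cos (θ₁ - θ₂)) = (2*R*Real.sin (|θ₁ - θ₂|/2))^2 := by
    rw [show Real.cos (θ₁ - θ₂) = Real.cos |θ₁ - θ₂| from (Real.cos_abs _).symm,
      one_sub_cos]
    ring
  rw [this, Real.sqrt_sq (by positivity)]

lemma circ_lipschitz (R : ℝ) (hR : 0 ≤ R) : LipschitzWith (Real.toNNReal R) (circ R) := by
  refine LipschitzWith.of_dist_le_mul fun θ₁ θ₂ => ?_
  rw [dist_eq_norm, chord_sq, Real.dist_eq, Real.coe_toNNReal _ hR]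
  have h1 : 2*R^2*(1 - Real.cos (θ₁ - θ₂)) ≤ (R * |θ₁ - θ₂|)^2 := by
    have := Real.one_sub_sq_div_two_le_cos (x := θ₁ - θ₂)
    have h2 : (θ₁ - θ₂)^2 = |θ₁ - θ₂|^2 := (sq_abs _).symm
    nlinarith [sq_nonneg R, sq_nonneg (θ₁ - θ₂)]
  calc Real.sqrt (2*R^2*(1 - Real.cos (θ₁ - θ₂))) ≤ Real.sqrt ((R * |θ₁ - θ₂|)^2) :=
        Real.sqrt_le_sqrt h1
    _ = R * |θ₁ - θ₂| := Real.sqrt_sq (by positivity)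

lemma chord_lower {R η : ℝ} (hR : 0 < R) (hη : 0 < η) (hηπ : η ≤ π) {θ₁ θ₂ : ℝ}
    (h : |θ₁ - θ₂| ≤ η) :
    2*R*Real.sin (η/2)/η * |θ₁ - θ₂| ≤ ‖circ R θ₁ - circ R θ₂‖ := by
  rw [chord_eq R θ₁ θ₂ hR.le (h.trans (by linarith [Real.pi_pos]))]
  have key : Real.sin (η/2) * (|θ₁ - θ₂|/2) ≤ Real.sin (|θ₁ - θ₂|/2) * (η/2) :=
    sin_lower (by positivity) (by linarith) (by linarith [Real.pi_pos])
  rw [div_mul_eq_mul_div, div_le_iff₀ hη]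
  nlinarith

lemma arc_lower_small {R η : ℝ} (hR : 0 < R) (hη : 0 < η) (hηπ : η ≤ π) {s t : ℝ}
    (hst : s ≤ t) (hl : t - s ≤ η) :
    ENNReal.ofReal (2*R*Real.sin (η/2)/η * (t - s)) ≤ μH[1] (circ R '' Set.Icc s t) := by
  set c : ℝ := 2*R*Real.sin (η/2)/η with hc_def
  have hsin : 0 < Real.sin (η/2) :=
    Real.sin_pos_of_pos_of_lt_pi (by positivity) (by linarith [Real.pi_pos])
  have hc : 0 < c := by positivity
  have key : ∀ a ∈ Set.Icc s t, ∀ b ∈ Set.Icc s t, c * |a - b| ≤ ‖circ R a - circ R b‖ := by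
    intro a ha b hb
    exact chord_lower hR hη hηπ (by rw [abs_sub_le_iff]; constructor <;>
      [skip; skip] <;> cases' ha with ha1 ha2 <;> cases' hb with hb1 hb2 <;> linarith)
  have hinj : Set.InjOn (circ R) (Set.Icc s t) := by
    intro a ha b hb hab
    have := key a ha b hb
    rw [hab, sub_self, norm_zero] at this
    have : |a - b| ≤ 0 := by
      by_contra h
      push_neg at h
      nlinarith
    have := abs_nonneg (a - b)
    have : |a - b| = 0 := le_antisymm ‹|a - b| ≤ 0› ‹0 ≤ |a - b|›
    linarith [abs_eq_zero.mp this, sub_eq_zero.mp (abs_eq_zero.mp this)]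
  set g := Function.invFunOn (circ R) (Set.Icc s t) with hg_def
  have himg : g '' (circ R '' Set.Icc s t) = Set.Icc s t :=
    hinj.invFunOn_image le_rfl
  have hglip : LipschitzOnWith (Real.toNNReal (1/c)) g (circ R '' Set.Icc s t) := by
    rw [lipschitzOnWith_iff_dist_le_mul]
    rintro x ⟨a, ha, rfl⟩ y ⟨b, hb, rfl⟩
    rw [hg_def, hinj.leftInvOn_invFunOn ha, hinj.leftInvOn_invFunOn hb,
      Real.dist_eq, dist_eq_norm, Real.coe_toNNReal _ (by positivity)]
    rw [one_div, ← div_eq_inv_mul, le_div_iff₀ hc, mul_comm]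
    exact key a ha b hb
  have h1 : μH[1] (g '' (circ R '' Set.Icc s t)) ≤
      (Real.toNNReal (1/c) : ENNReal) ^ (1:ℝ) * μH[1] (circ R '' Set.Icc s t) :=
    hglip.hausdorffMeasure_image_le zero_le_one
  rw [himg, ENNReal.rpow_one] at h1
  have h2 : μH[1] (Set.Icc s t) = ENNReal.ofReal (t - s) := by
    rw [MeasureTheory.hausdorffMeasure_real, Real.volume_Icc]
  rw [h2] at h1
  have hcoe : (Real.toNNReal (1/c) : ENNReal) = ENNReal.ofReal (1/c) := rfl
  rw [hcoe] at h1
  calc ENNReal.ofReal (c * (t - s)) = ENNReal.ofReal c * ENNReal.ofReal (t - s) :=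
        ENNReal.ofReal_mul hc.le
    _ ≤ ENNReal.ofReal c * (ENNReal.ofReal (1/c) * μH[1] (circ R '' Set.Icc s t)) := by
        exact mul_le_mul_right h1 _
    _ = (ENNReal.ofReal c * ENNReal.ofReal (1/c)) * μH[1] (circ R '' Set.Icc s t) := by
        rw [mul_assoc]
    _ = μH[1] (circ R '' Set.Icc s t) := by
        rw [← ENNReal.ofReal_mul hc.le, mul_one_div, div_self hc.ne', ENNReal.ofReal_one, one_mul]

lemma circ_eq_imp {R θ₁ θ₂ : ℝ} (hR : 0 < R) (h : circ R θ₁ = circ R θ₂) :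
    ∃ m : ℤ, (m:ℝ) * (2*π) = θ₁ - θ₂ := by
  have h0 : ‖circ R θ₁ - circ R θ₂‖ = 0 := by rw [h, sub_self, norm_zero]
  rw [chord_sq] at h0
  have hcos := Real.cos_le_one (θ₁ - θ₂)
  have hR2 : 0 < R^2 := by positivity
  have harg : 2*R^2*(1 - Real.cos (θ₁ - θ₂)) = 0 := by
    have := Real.sqrt_eq_zero (by nlinarith) |>.mp h0
    exact this
  have : Real.cos (θ₁ - θ₂) = 1 := by nlinarith
  exact (Real.cos_eq_one_iff _).mp this

lemma union_Icc (p : ℕ → ℝ) (hp : ∀ k, p k ≤ p (k+1)) :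
    ∀ n : ℕ, 1 ≤ n → (⋃ k ∈ Finset.range n, Set.Icc (p k) (p (k+1))) = Set.Icc (p 0) (p n) := by
  intro n
  induction n with
  | zero => intro h; omega
  | succ n ih =>
    intro _
    rcases Nat.eq_zero_or_pos n with rfl | hn
    · simp
    · rw [Finset.range_add_one, Finset.set_biUnion_insert, ih hn, Set.union_comm]
      have hmono : p 0 ≤ p n := monotone_nat_of_le_succ hp (Nat.zero_le n)
      exact Set.Icc_union_Icc_eq_Icc hmono (hp n)

lemma arc_lower_n {R : ℝ} (hR : 0 < R) {a b : ℝ} (hab : a < b) (h2 : b - a ≤ 2*π)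
    (n : ℕ) (hn : 0 < n) (hπ : (b - a)/n ≤ π) :
    ENNReal.ofReal (2*R*n*Real.sin ((b-a)/(2*n))) ≤ μH[1] (circ R '' Set.Icc a b) := by
  haveI : NoAtoms (μH[1] : Measure (EuclideanSpace ℝ (Fin 3))) :=
    MeasureTheory.Measure.noAtoms_hausdorff _ one_pos
  set L : ℝ := b - a with hL
  have hL0 : 0 < L := by linarith
  set η : ℝ := L / n with hη_def
  have hη : 0 < η := by positivity
  set p : ℕ → ℝ := fun k => a + k * η with hp_def
  have hp : ∀ k, p k ≤ p (k+1) := by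
    intro k; simp only [hp_def]; push_cast; nlinarith
  have hpk : ∀ k : ℕ, p (k+1) - p k = η := by
    intro k; simp only [hp_def]; push_cast; ring
  have hpn : p n = b := by
    simp only [hp_def, hη_def]
    field_simp
    linarith
  have hp0 : p 0 = a := by simp [hp_def]
  have hpart : Set.Icc a b = ⋃ k ∈ Finset.range n, Set.Icc (p k) (p (k+1)) := by
    rw [union_Icc p hp n hn, hp0, hpn]
  have himg : circ R '' Set.Icc a b = ⋃ k ∈ Finset.range n, circ R '' Set.Icc (p k) (p (k+1)) := by
    rw [hpart, Set.image_iUnion₂]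
  have hp_mem : ∀ k : ℕ, k ≤ n → a ≤ p k ∧ p k ≤ b := by
    intro k hk
    constructor
    · simp only [hp_def]
      have hk0 : (0:ℝ) ≤ (k:ℝ) := Nat.cast_nonneg k
      nlinarith
    · rw [← hpn]; simp only [hp_def]
      have : (k:ℝ) ≤ n := by exact_mod_cast hk
      nlinarith
  have hdisj_main : ∀ j k : ℕ, j < k → k < n →
      (circ R '' Set.Icc (p j) (p (j+1))) ∩ (circ R '' Set.Icc (p k) (p (k+1)))
        ⊆ {circ R a, circ R (p k)} := by
    intro j k hjk hkn x ⟨⟨θ₁, hθ₁, hx1⟩, ⟨θ₂, hθ₂, hx2⟩⟩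
    obtain ⟨m, hm⟩ := circ_eq_imp hR (hx1.trans hx2.symm)
    have hθ₁b : a ≤ θ₁ ∧ θ₁ ≤ b := by
      obtain ⟨h1, h2⟩ := hθ₁
      exact ⟨(hp_mem j (by omega)).1.trans h1, h2.trans (hp_mem (j+1) (by omega)).2⟩
    have hθ₂b : a ≤ θ₂ ∧ θ₂ ≤ b := by
      obtain ⟨h1, h2⟩ := hθ₂
      exact ⟨(hp_mem k (by omega)).1.trans h1, h2.trans (hp_mem (k+1) (by omega)).2⟩
    have hord : θ₁ ≤ p k := by
      have h1 : θ₁ ≤ p (j+1) := hθ₁.2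
      have h2 : p (j+1) ≤ p k := monotone_nat_of_le_succ hp (by omega)
      linarith
    rcases eq_or_ne m 0 with rfl | hm0
    · have : θ₁ = θ₂ := by push_cast at hm; linarith
      have hpk' : θ₁ = p k := le_antisymm hord (by rw [this]; exact hθ₂.1)
      refine Set.mem_insert_iff.mpr (Or.inr ?_)
      simp only [Set.mem_singleton_iff]
      rw [← hx1, hpk']
    · have habs : |(m:ℝ)| ≥ 1 := by
        rw [← Int.cast_abs]
        exact_mod_cast Int.one_le_abs (by exact_mod_cast hm0)
      have hle : θ₁ - θ₂ ≤ 0 := by linarith [hθ₂.1]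
      have hm_neg : (m:ℝ) ≤ -1 := by
        rcases le_or_gt (m:ℝ) (-1) with h | h
        · exact h
        · exfalso
          have : (1:ℝ) ≤ m := by
            rcases abs_cases (m:ℝ) with ⟨h1,_⟩|⟨h1,_⟩ <;> [linarith; linarith]
          nlinarith [Real.pi_pos]
      have h2pi : θ₂ - θ₁ ≥ 2*π := by nlinarith [Real.pi_pos]
      have hθ₁a : θ₁ = a := by
        have : θ₂ - θ₁ ≤ 2*π := by linarith [hθ₁b.1, hθ₂b.2]
        have he : θ₂ - θ₁ = 2*π := le_antisymm this h2pi
        linarith [hθ₂b.2, hθ₁b.1]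
      refine Set.mem_insert_iff.mpr (Or.inl ?_)
      rw [← hx1, hθ₁a]
  have hnull : ∀ j k : ℕ, j < k → k < n →
      (μH[1] : Measure (EuclideanSpace ℝ (Fin 3)))
        ((circ R '' Set.Icc (p j) (p (j+1))) ∩ (circ R '' Set.Icc (p k) (p (k+1)))) = 0 := by
    intro j k hjk hkn
    refine measure_mono_null (hdisj_main j k hjk hkn) ?_
    haveI := MeasureTheory.Measure.nullSingletonClass_hausdorff (X := EuclideanSpace ℝ (Fin 3)) one_pos
    exact ((Set.finite_singleton _).insert _).measure_zero _
  have hmeas : ∀ k ∈ Finset.range n,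
      NullMeasurableSet (circ R '' Set.Icc (p k) (p (k+1)))
        (μH[1] : Measure (EuclideanSpace ℝ (Fin 3))) := by
    intro k _
    exact ((isCompact_Icc.image (circ_continuous R)).isClosed.measurableSet).nullMeasurableSet
  have hpair : (↑(Finset.range n) : Set ℕ).Pairwise
      (Function.onFun (AEDisjoint (μH[1] : Measure (EuclideanSpace ℝ (Fin 3))))
        fun k => circ R '' Set.Icc (p k) (p (k+1))) := by
    intro j hj k hk hjk
    simp only [Finset.coe_range, Set.mem_Iio] at hj hk
    rcases hjk.lt_or_gt with h | h
    · exact hnull j k h hk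
    · exact AEDisjoint.symm (hnull k j h hj)
  rw [himg, measure_biUnion_finset₀ hpair hmeas]
  have hterm : ∀ k ∈ Finset.range n,
      ENNReal.ofReal (2*R*Real.sin (η/2)) ≤ μH[1] (circ R '' Set.Icc (p k) (p (k+1))) := by
    intro k _
    have := arc_lower_small hR hη hπ (s := p k) (t := p (k+1))
      (by linarith [hpk k, hη]) (by rw [hpk k])
    rw [hpk k] at this
    have heq : 2*R*Real.sin (η/2)/η * η = 2*R*Real.sin (η/2) := by
      field_simp
    rwa [heq] at this
  calc ENNReal.ofReal (2*R*n*Real.sin ((b-a)/(2*n)))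
      = (n : ENNReal) * ENNReal.ofReal (2*R*Real.sin (η/2)) := by
        have hne : (n:ℝ) ≠ 0 := Nat.cast_ne_zero.mpr hn.ne'
        have h1 : 2*R*(n:ℝ)*Real.sin ((b-a)/(2*n)) = (n:ℝ) * (2*R*Real.sin (η/2)) := by
          have : (b-a)/(2*(n:ℝ)) = η/2 := by
            rw [hη_def, hL]
            ring
          rw [this]; ring
        rw [h1, ENNReal.ofReal_mul (by positivity), ENNReal.ofReal_natCast]
    _ = ∑ _k ∈ Finset.range n, ENNReal.ofReal (2*R*Real.sin (η/2)) := by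
        rw [Finset.sum_const, Finset.card_range, nsmul_eq_mul]
    _ ≤ ∑ k ∈ Finset.range n, μH[1] (circ R '' Set.Icc (p k) (p (k+1))) :=
        Finset.sum_le_sum hterm

lemma sin_div_tendsto : Tendsto (fun x : ℝ => Real.sin x / x) (nhdsWithin 0 {0}ᶜ) (nhds 1) := by
  have h := Real.hasDerivAt_sin 0
  rw [hasDerivAt_iff_tendsto_slope] at h
  rw [Real.cos_zero] at h
  refine h.congr' ?_
  filter_upwards [self_mem_nhdsWithin] with x hx
  simp only [Set.mem_compl_iff, Set.mem_singleton_iff] at hx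
  rw [slope_def_field]
  rw [Real.sin_zero]
  ring

lemma arc_measure {R : ℝ} (hR : 0 < R) {a b : ℝ} (hab : a ≤ b) (h2 : b - a ≤ 2*π) :
    μH[1] (circ R '' Set.Icc a b) = ENNReal.ofReal (R * (b - a)) := by
  have hupper : μH[1] (circ R '' Set.Icc a b) ≤ ENNReal.ofReal (R * (b - a)) := by
    have h := (circ_lipschitz R hR.le).hausdorffMeasure_image_le zero_le_one (Set.Icc a b)
    rw [MeasureTheory.hausdorffMeasure_real, Real.volume_Icc, ENNReal.rpow_one] at h
    calc μH[1] (circ R '' Set.Icc a b) ≤ (Real.toNNReal R : ENNReal) * ENNReal.ofReal (b - a) := h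
      _ = ENNReal.ofReal R * ENNReal.ofReal (b - a) := rfl
      _ = ENNReal.ofReal (R * (b - a)) := (ENNReal.ofReal_mul hR.le).symm
  rcases eq_or_lt_of_le hab with rfl | hab'
  · refine le_antisymm ?_ (by simp)
    simpa using hupper
  · refine le_antisymm hupper ?_
    set L : ℝ := b - a with hL
    have hL0 : 0 < L := by linarith
    have hu0 : Tendsto (fun n : ℕ => L/(2*(n:ℝ))) atTop (nhds 0) := by
      have := tendsto_const_div_atTop_nhds_zero_nat (L/2)
      refine this.congr fun n => ?_
      rw [div_div]
    have hu : Tendsto (fun n : ℕ => L/(2*(n:ℝ))) atTop (nhdsWithin 0 {0}ᶜ) := by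
      refine tendsto_nhdsWithin_of_tendsto_nhds_of_eventually_within _ hu0 ?_
      filter_upwards [eventually_ge_atTop 1] with n hn
      have hn' : (0:ℝ) < n := by exact_mod_cast hn
      simp only [Set.mem_compl_iff, Set.mem_singleton_iff]
      positivity
    have hsin : Tendsto (fun n : ℕ => Real.sin (L/(2*(n:ℝ))) / (L/(2*(n:ℝ)))) atTop (nhds 1) :=
      sin_div_tendsto.comp hu
    have hcn : Tendsto (fun n : ℕ => 2*R*(n:ℝ)*Real.sin (L/(2*(n:ℝ)))) atTop (nhds (R * L)) := by
      have h1 : Tendsto (fun n : ℕ => R * L * (Real.sin (L/(2*(n:ℝ))) / (L/(2*(n:ℝ)))))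
          atTop (nhds (R * L)) := by
        have := hsin.const_mul (R * L)
        simpa using this
      refine h1.congr' ?_
      filter_upwards [eventually_ge_atTop 1] with n hn
      have hn' : (0:ℝ) < n := by exact_mod_cast hn
      field_simp
    have htendE : Tendsto (fun n : ℕ => ENNReal.ofReal (2*R*(n:ℝ)*Real.sin (L/(2*(n:ℝ)))))
        atTop (nhds (ENNReal.ofReal (R * L))) :=
      (ENNReal.continuous_ofReal.tendsto _).comp hcn
    refine le_of_tendsto htendE ?_
    filter_upwards [eventually_ge_atTop 2] with n hn
    have hn0 : 0 < n := by omega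
    have hn2 : (2:ℝ) ≤ n := by exact_mod_cast hn
    exact arc_lower_n hR hab' h2 n hn0 (by
      rw [div_le_iff₀ (by linarith)]
      nlinarith [Real.pi_pos])

lemma inner3 (x y : EuclideanSpace ℝ (Fin 3)) :
    ⟪x, y⟫ = x 0 * y 0 + x 1 * y 1 + x 2 * y 2 := by
  simp [PiLp.inner_apply, RCLike.inner_apply, Fin.sum_univ_three]; ring

lemma circ_norm (R θ : ℝ) (hR : 0 ≤ R) : ‖circ R θ‖ = R := by
  rw [EuclideanSpace.norm_eq]
  simp [circ, Fin.sum_univ_three]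
  rw [show (R*Real.cos θ)^2 + (R*Real.sin θ)^2 = R^2 by
    nlinarith [Real.sin_sq_add_cos_sq θ], Real.sqrt_sq hR]

lemma circ_two (R θ : ℝ) : circ R θ 2 = 0 := by simp [circ]
lemma circ_zero' (R θ : ℝ) : circ R θ 0 = R * Real.cos θ := by simp [circ]
lemma circ_one' (R θ : ℝ) : circ R θ 1 = R * Real.sin θ := by simp [circ]

set_option maxHeartbeats 2000000 in
/-- With `v₂ = R_G² + r_E²`, for every `r > 0` such that
`−1 ≤ (v₂ − r²)/(2·R_G·r_E·cos φ) ≤ 1`, the one-dimensional Hausdorff measure of the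
portion of the geostationary orbit within distance `r` of the terminal equals
`2·R_G·arccos((v₂ − r²)/(2·R_G·r_E·cos φ))`. -/
theorem hausdorff_measure_geo_within_distance
    (r_E a_G φ : ℝ) (hr : 0 < r_E) (ha : 0 < a_G)
    (hφ : φ ∈ Set.Ioo (-(π / 2)) (π / 2))
    (R_G : ℝ) (hR : R_G = r_E + a_G)
    (C_G : Set (EuclideanSpace ℝ (Fin 3)))
    (hC : C_G = {x : EuclideanSpace ℝ (Fin 3) | ‖x‖ = R_G ∧ x 2 = 0})
    (t : EuclideanSpace ℝ (Fin 3))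
    (ht : t = ![r_E * Real.cos φ, 0, r_E * Real.sin φ])
    (v₂ : ℝ) (hv₂ : v₂ = R_G ^ 2 + r_E ^ 2) :
    ∀ r : ℝ, 0 < r →
      -1 ≤ (v₂ - r ^ 2) / (2 * R_G * r_E * Real.cos φ) →
      (v₂ - r ^ 2) / (2 * R_G * r_E * Real.cos φ) ≤ 1 →
      μH[1] {x ∈ C_G | ‖x - t‖ ≤ r} =
        ENNReal.ofReal
          (2 * R_G * Real.arccos ((v₂ - r ^ 2) / (2 * R_G * r_E * Real.cos φ))) := by
  intro r hr0 hc1 hc2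
  have hcosφ : 0 < Real.cos φ := Real.cos_pos_of_mem_Ioo hφ
  have hRG : 0 < R_G := by rw [hR]; linarith
  set c : ℝ := (v₂ - r ^ 2) / (2 * R_G * r_E * Real.cos φ) with hc_def
  set α : ℝ := Real.arccos c with hα_def
  have hD : 0 < 2 * R_G * r_E * Real.cos φ := by positivity
  have hα0 : 0 ≤ α := Real.arccos_nonneg c
  have hαπ : α ≤ π := Real.arccos_le_pi c
  have hcosα : Real.cos α = c := Real.cos_arccos hc1 hc2
  -- distance formula
  have hteq : ∀ x : EuclideanSpace ℝ (Fin 3), x 2 = 0 →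
      ‖x - t‖^2 = ‖x‖^2 + r_E^2 - 2*r_E*Real.cos φ*(x 0) := by
    intro x hx2
    rw [norm_sub_sq_real]
    have h1 : ⟪x, t⟫ = r_E*Real.cos φ*(x 0) := by
      rw [inner3, ht]
      simp [hx2]
      ring
    have h2 : ‖t‖^2 = r_E^2 := by
      rw [← real_inner_self_eq_norm_sq, inner3, ht]
      simp
      nlinarith [Real.sin_sq_add_cos_sq φ]
    rw [h1, h2]
    ring
  have hset : {x ∈ C_G | ‖x - t‖ ≤ r} = circ R_G '' Set.Icc (-α) α := by
    ext x
    simp only [Set.mem_setOf_eq, Set.mem_image, hC]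
    constructor
    · rintro ⟨⟨hxn, hx2⟩, hxr⟩
      have hnorm2 : (x 0)^2 + (x 1)^2 = R_G^2 := by
        have h := hxn
        rw [EuclideanSpace.norm_eq, Fin.sum_univ_three] at h
        simp only [Real.norm_eq_abs, sq_abs] at h
        have hS : (0:ℝ) ≤ (x 0)^2 + (x 1)^2 + (x 2)^2 := by positivity
        have := congrArg (fun y => y^2) h
        rw [Real.sq_sqrt hS] at this
        rw [hx2] at this
        nlinarith
      have hx0b : (x 0)^2 ≤ R_G^2 := by nlinarith [sq_nonneg (x 1)]
      have hx0l : -R_G ≤ x 0 := by nlinarith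
      have hx0u : x 0 ≤ R_G := by nlinarith
      set θ₀ : ℝ := Real.arccos (x 0 / R_G) with hθ₀_def
      have hd1 : -1 ≤ x 0 / R_G := by rw [le_div_iff₀ hRG]; linarith
      have hd2 : x 0 / R_G ≤ 1 := by rw [div_le_one hRG]; linarith
      have hcosθ₀ : Real.cos θ₀ = x 0 / R_G := Real.cos_arccos hd1 hd2
      have hθ₀0 : 0 ≤ θ₀ := Real.arccos_nonneg _
      have hsinθ₀ : Real.sin θ₀ = |x 1| / R_G := by
        rw [hθ₀_def, Real.sin_arccos]
        rw [show 1 - (x 0 / R_G)^2 = (|x 1| / R_G)^2 by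
          rw [div_pow, div_pow, sq_abs]
          field_simp
          nlinarith]
        exact Real.sqrt_sq (by positivity)
      -- the distance condition gives c ≤ x 0 / R_G
      have hsq : ‖x - t‖^2 ≤ r^2 := by nlinarith [norm_nonneg (x - t)]
      rw [hteq x hx2, hxn] at hsq
      have hcle : c * R_G ≤ x 0 := by
        rw [hc_def, div_mul_eq_mul_div, div_le_iff₀ hD]
        nlinarith
      have hθ₀α : θ₀ ≤ α := by
        rw [hθ₀_def, hα_def, Real.arccos, Real.arccos]
        have : Real.arcsin c ≤ Real.arcsin (x 0 / R_G) := by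
          refine Real.monotone_arcsin ?_
          rw [le_div_iff₀ hRG]
          linarith
        linarith
      refine ⟨if 0 ≤ x 1 then θ₀ else -θ₀, ?_, ?_⟩
      · split_ifs
        · exact ⟨by linarith, hθ₀α⟩
        · exact ⟨by linarith, by linarith⟩
      · ext i
        fin_cases i <;> split_ifs with hx1s <;>
          simp only [circ, Real.cos_neg, Real.sin_neg] <;>
          simp [hcosθ₀, hsinθ₀]
        · field_simp
        · field_simp
        · rw [abs_of_nonneg hx1s]; field_simp
        · rw [abs_of_neg (not_le.mp hx1s)]; field_simp
        · exact hx2.symm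
        · exact hx2.symm
    · rintro ⟨θ, ⟨hθ1, hθ2⟩, rfl⟩
      refine ⟨⟨circ_norm _ _ hRG.le, circ_two _ _⟩, ?_⟩
      have hcosθ : c ≤ Real.cos θ := by
        have h := Real.cos_le_cos_of_nonneg_of_le_pi (abs_nonneg θ) hαπ
          (abs_le.mpr ⟨hθ1, hθ2⟩)
        rw [Real.cos_abs] at h
        rw [← hcosα]
        exact h
      have hsq : ‖circ R_G θ - t‖^2 ≤ r^2 := by
        rw [hteq (circ R_G θ) (circ_two _ _), circ_norm _ _ hRG.le, circ_zero']
        have hDc : (2 * R_G * r_E * Real.cos φ) * c = v₂ - r^2 := by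
          rw [hc_def]
          field_simp
        nlinarith
      nlinarith [norm_nonneg (circ R_G θ - t)]
  rw [hset, arc_measure hRG (by linarith) (by linarith)]
  congr 1
  ring
end

section
/- (Change of variables for the GEO interference integral in Lemma 4.) Let v₁ = 4·R_G²·r_E²·cos² φ, v₂ = R_G² + r_E², assume R_G·cos φ > r_E, and let r_vis,max^G = √(a_G² + 2·a_G·r_E). Then for every r₀ with r_min^G(φ) = √((R_G − r_E cos φ)² + r_E² sin² φ) ≤ r₀ ≤ r_vis,max^G and every continuous function f : ℝ → ℝ, the integral of f(‖x − t‖) with respect to the 1-dimensional Hausdorff measure over the set {x ∈ C_G : ⟪x − t, t⟫ ≥ 0 and ‖x − t‖ ≥ r₀} equals ∫_{r₀}^{r_vis,max^G} f(r) · 4·r·R_G / √(v₁ − (v₂ − r²)²) dr. -/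
open Real MeasureTheory Set
open scoped RealInnerProductSpace ENNReal

noncomputable def geoCurve (R θ : ℝ) : EuclideanSpace ℝ (Fin 3) :=
  WithLp.toLp 2 ![R * Real.cos θ, R * Real.sin θ, 0]

lemma geoCurve_continuous (R : ℝ) : Continuous (geoCurve R) := by
  have h : Continuous (fun θ : ℝ => (![R * Real.cos θ, R * Real.sin θ, 0] : Fin 3 → ℝ)) := by
    apply continuous_pi
    intro i
    fin_cases i <;> simp <;> fun_prop
  exact ((EuclideanSpace.equiv (Fin 3) ℝ).symm.continuous.comp h : _)

lemma geoCurve_apply0 (R θ : ℝ) : geoCurve R θ 0 = R * Real.cos θ := rfl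
lemma geoCurve_apply1 (R θ : ℝ) : geoCurve R θ 1 = R * Real.sin θ := rfl
lemma geoCurve_apply2 (R θ : ℝ) : geoCurve R θ 2 = 0 := rfl

lemma euclidean_inner_sub (x y : EuclideanSpace ℝ (Fin 3)) :
    ⟪x - y, y⟫ = (x 0 - y 0) * y 0 + (x 1 - y 1) * y 1 + (x 2 - y 2) * y 2 := by
  simp [PiLp.inner_apply, Fin.sum_univ_three, RCLike.inner_apply, conj_trivial,
    PiLp.sub_apply]
  ring

lemma euclidean_norm_sub (x y : EuclideanSpace ℝ (Fin 3)) :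
    ‖x - y‖ = Real.sqrt ((x 0 - y 0) ^ 2 + (x 1 - y 1) ^ 2 + (x 2 - y 2) ^ 2) := by
  rw [EuclideanSpace.norm_eq]
  simp [Fin.sum_univ_three, sq_abs, PiLp.sub_apply]

lemma euclidean_norm_eq (x : EuclideanSpace ℝ (Fin 3)) :
    ‖x‖ = Real.sqrt ((x 0) ^ 2 + (x 1) ^ 2 + (x 2) ^ 2) := by
  rw [EuclideanSpace.norm_eq]
  simp [Fin.sum_univ_three, sq_abs]

lemma geoCurve_dist (R : ℝ) (hR : 0 ≤ R) (θ θ' : ℝ) :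
    dist (geoCurve R θ) (geoCurve R θ') = 2 * R * |Real.sin ((θ - θ') / 2)| := by
  rw [EuclideanSpace.dist_eq]
  have h1 : ∀ i, dist (geoCurve R θ i) (geoCurve R θ' i) ^ 2 =
      (geoCurve R θ i - geoCurve R θ' i) ^ 2 := by
    intro i; rw [Real.dist_eq, sq_abs]
  have hc : Real.cos (θ - θ') = Real.cos θ * Real.cos θ' + Real.sin θ * Real.sin θ' :=
    Real.cos_sub θ θ'
  have hs : Real.sin ((θ - θ') / 2) ^ 2 = (1 - Real.cos (θ - θ')) / 2 := by
    have h2 : Real.cos (θ - θ') = 2 * Real.cos ((θ - θ') / 2) ^ 2 - 1 := by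
      have h' := Real.cos_two_mul ((θ - θ') / 2)
      rw [show 2 * ((θ - θ') / 2) = θ - θ' by ring] at h'
      exact h'
    have := Real.sin_sq_add_cos_sq ((θ - θ') / 2)
    nlinarith
  have key : (∑ i, dist (geoCurve R θ i) (geoCurve R θ' i) ^ 2)
      = (2 * R * |Real.sin ((θ - θ') / 2)|) ^ 2 := by
    simp only [h1, Fin.sum_univ_three]
    have e0 : geoCurve R θ 0 = R * Real.cos θ := rfl
    have e1 : geoCurve R θ 1 = R * Real.sin θ := rfl
    have e2 : geoCurve R θ 2 = 0 := rfl
    have f0 : geoCurve R θ' 0 = R * Real.cos θ' := rfl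
    have f1 : geoCurve R θ' 1 = R * Real.sin θ' := rfl
    have f2 : geoCurve R θ' 2 = 0 := rfl
    rw [e0, e1, e2, f0, f1, f2]
    have habs : (2 * R * |Real.sin ((θ - θ') / 2)|) ^ 2
        = 4 * R ^ 2 * Real.sin ((θ - θ') / 2) ^ 2 := by
      rw [mul_pow, mul_pow, sq_abs]; ring
    rw [habs]
    have h3 := Real.sin_sq_add_cos_sq θ
    have h4 := Real.sin_sq_add_cos_sq θ'
    nlinarith
  rw [key, Real.sqrt_sq (by positivity)]

lemma sin_ge_mul_cos {u : ℝ} (h0 : 0 ≤ u) (h1 : u ≤ π / 2) : u * Real.cos u ≤ Real.sin u := by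
  rcases eq_or_lt_of_le h0 with h | h
  · simp [← h]
  rcases eq_or_lt_of_le h1 with h' | h'
  · rw [h']; simp
  have ht := Real.lt_tan h h'
  have hc : 0 < Real.cos u := Real.cos_pos_of_mem_Ioo ⟨by linarith [Real.pi_pos], h'⟩
  rw [Real.tan_eq_sin_div_cos] at ht
  calc u * Real.cos u ≤ (Real.sin u / Real.cos u) * Real.cos u := by
        apply mul_le_mul_of_nonneg_right ht.le hc.le
    _ = Real.sin u := by field_simp

lemma geoCurve_lipschitz (R : ℝ) (hR : 0 ≤ R) : LipschitzWith R.toNNReal (geoCurve R) := by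
  apply LipschitzWith.of_dist_le_mul
  intro θ θ'
  rw [geoCurve_dist R hR, Real.coe_toNNReal _ hR, Real.dist_eq]
  have := Real.abs_sin_le_abs (x := (θ - θ') / 2)
  calc 2 * R * |Real.sin ((θ - θ') / 2)| ≤ 2 * R * |(θ - θ') / 2| := by
        apply mul_le_mul_of_nonneg_left this (by positivity)
    _ = R * |θ - θ'| := by rw [abs_div]; simp [abs_of_pos]; ring

lemma geoCurve_dist_ge (R : ℝ) (hR : 0 ≤ R) {L θ θ' : ℝ} (hL : L ≤ π)
    (h : |θ - θ'| ≤ L) :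
    R * |θ - θ'| * Real.cos (L / 2) ≤ dist (geoCurve R θ) (geoCurve R θ') := by
  rw [geoCurve_dist R hR]
  have h0 : (0:ℝ) ≤ |θ - θ'| := abs_nonneg _
  have hL0 : 0 ≤ L := le_trans h0 h
  set u := |θ - θ'| / 2 with hu
  have hu0 : 0 ≤ u := by positivity
  have hu1 : u ≤ π / 2 := by rw [hu]; linarith
  have habs : |Real.sin ((θ - θ') / 2)| = Real.sin u := by
    have harg : u = |(θ - θ') / 2| := by rw [hu, abs_div]; norm_num
    rcases le_or_gt 0 ((θ - θ') / 2) with hv | hv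
    · have huv : u = (θ - θ') / 2 := by rw [harg, abs_of_nonneg hv]
      rw [huv]
      refine abs_of_nonneg (Real.sin_nonneg_of_nonneg_of_le_pi hv ?_)
      rw [← huv]; linarith [Real.pi_pos]
    · have huv : u = -((θ - θ') / 2) := by rw [harg, abs_of_neg hv]
      rw [huv, Real.sin_neg, abs_of_nonpos]
      apply Real.sin_nonpos_of_nonpos_of_neg_pi_le hv.le
      have : -((θ - θ') / 2) ≤ π / 2 := by rw [← huv]; exact hu1
      linarith [Real.pi_pos]
  rw [habs]
  have hcc : Real.cos (L / 2) ≤ Real.cos u := by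
    apply Real.cos_le_cos_of_nonneg_of_le_pi hu0 (by linarith [Real.pi_pos]) (by rw [hu]; linarith)
  have h2 : u * Real.cos u ≤ Real.sin u := sin_ge_mul_cos hu0 hu1
  have h3 : u * Real.cos (L / 2) ≤ u * Real.cos u := mul_le_mul_of_nonneg_left hcc hu0
  calc R * |θ - θ'| * Real.cos (L / 2) = 2 * R * (u * Real.cos (L / 2)) := by rw [hu]; ring
    _ ≤ 2 * R * Real.sin u := by
        apply mul_le_mul_of_nonneg_left (le_trans h3 h2) (by positivity)

lemma geoCurve_injOn (R : ℝ) (hR : 0 < R) {a b : ℝ} (hab : b - a ≤ π) :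
    Set.InjOn (geoCurve R) (Set.Icc a b) := by
  intro θ hθ θ' hθ' he
  have hd : dist (geoCurve R θ) (geoCurve R θ') = 0 := by rw [he]; simp
  rw [geoCurve_dist R hR.le] at hd
  have hs : Real.sin ((θ - θ') / 2) = 0 := by
    have : |Real.sin ((θ - θ') / 2)| = 0 :=
      le_antisymm (by nlinarith [abs_nonneg (Real.sin ((θ - θ') / 2))])
        (abs_nonneg _)
    exact abs_eq_zero.mp this
  have hb : |(θ - θ') / 2| < π := by
    rw [abs_div]
    have : |θ - θ'| ≤ π := by
      simp only [Set.mem_Icc] at hθ hθ'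
      rw [abs_sub_le_iff]
      constructor <;> linarith
    have hπ := Real.pi_pos
    simp only [abs_two]
    rw [div_lt_iff₀ (by norm_num)]
    linarith
  have := (Real.sin_eq_zero_iff_of_lt_of_lt (by cases abs_lt.mp hb; linarith)
    (by cases abs_lt.mp hb; linarith)).mp hs
  have : θ - θ' = 0 := by linarith
  linarith

/-- Angle-recovery map: inverts `geoCurve R` on arcs centered at angle `m` of half-width `≤ π/2`. -/
noncomputable def geoAngle (R m : ℝ) (x : EuclideanSpace ℝ (Fin 3)) : ℝ :=
  m + Real.arcsin ((x 1 * Real.cos m - x 0 * Real.sin m) / R)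

lemma geoAngle_continuous (R m : ℝ) : Continuous (geoAngle R m) := by
  unfold geoAngle
  have h0 : Continuous fun x : EuclideanSpace ℝ (Fin 3) => x 0 := by
    exact (EuclideanSpace.proj (0 : Fin 3) : EuclideanSpace ℝ (Fin 3) →L[ℝ] ℝ).continuous
  have h1 : Continuous fun x : EuclideanSpace ℝ (Fin 3) => x 1 := by
    exact (EuclideanSpace.proj (1 : Fin 3) : EuclideanSpace ℝ (Fin 3) →L[ℝ] ℝ).continuous
  exact continuous_const.add (Real.continuous_arcsin.comp
    (((h1.mul continuous_const).sub (h0.mul continuous_const)).div_const R))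

lemma geoAngle_geoCurve (R m θ : ℝ) (hR : 0 < R) (h : |θ - m| ≤ π / 2) :
    geoAngle R m (geoCurve R θ) = θ := by
  unfold geoAngle
  have e0 : geoCurve R θ 0 = R * Real.cos θ := rfl
  have e1 : geoCurve R θ 1 = R * Real.sin θ := rfl
  rw [e0, e1]
  have harg : (R * Real.sin θ * Real.cos m - R * Real.cos θ * Real.sin m) / R
      = Real.sin (θ - m) := by
    rw [Real.sin_sub]; field_simp
  rw [harg, Real.arcsin_sin (by cases abs_le.mp h; linarith) (by cases abs_le.mp h; linarith)]
  ring

lemma geoAngle_lipschitzOn (R m : ℝ) (hR : 0 < R) {c d : ℝ} (hcd : c ≤ d) (hlen : d - c ≤ π)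
    (hcos : 0 < Real.cos ((d - c) / 2)) :
    LipschitzOnWith (1 / (R * Real.cos ((d - c) / 2))).toNNReal (geoAngle R ((c + d) / 2))
      (geoCurve R '' Set.Icc c d) := by
  rw [lipschitzOnWith_iff_dist_le_mul]
  rintro x ⟨θ, hθ, rfl⟩ y ⟨θ', hθ', rfl⟩
  simp only [Set.mem_Icc] at hθ hθ'
  have hm : ∀ ψ ∈ Set.Icc c d, |ψ - (c + d) / 2| ≤ π / 2 := by
    intro ψ hψ
    simp only [Set.mem_Icc] at hψ
    rw [abs_le]; constructor <;> linarith
  rw [geoAngle_geoCurve R _ θ hR (hm θ (by simp [hθ.1, hθ.2])),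
    geoAngle_geoCurve R _ θ' hR (hm θ' (by simp [hθ'.1, hθ'.2]))]
  have hd : |θ - θ'| ≤ d - c := by rw [abs_sub_le_iff]; constructor <;> linarith
  have key := geoCurve_dist_ge R hR.le hlen hd
  rw [Real.coe_toNNReal _ (by positivity), Real.dist_eq]
  rw [div_mul_eq_mul_div, one_mul, le_div_iff₀ (by positivity)]
  calc |θ - θ'| * (R * Real.cos ((d - c) / 2))
      = R * |θ - θ'| * Real.cos ((d - c) / 2) := by ring
    _ ≤ dist (geoCurve R θ) (geoCurve R θ') := key

lemma geoArc_measure_le (R : ℝ) (hR : 0 ≤ R) {c d : ℝ} (hcd : c ≤ d) :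
    μH[1] (geoCurve R '' Set.Icc c d) ≤ ENNReal.ofReal (R * (d - c)) := by
  have h := (geoCurve_lipschitz R hR).hausdorffMeasure_image_le
    (zero_le_one) (Set.Icc c d)
  rw [MeasureTheory.hausdorffMeasure_real, Real.volume_Icc, ENNReal.rpow_one] at h
  refine h.trans (le_of_eq ?_)
  rw [show ((R.toNNReal : ℝ≥0∞)) = ENNReal.ofReal R from rfl, ← ENNReal.ofReal_mul hR]

lemma geoArc_lower (R : ℝ) (hR : 0 < R) {c d : ℝ} (hcd : c ≤ d) (hlen : d - c ≤ π) :
    ENNReal.ofReal (R * (d - c) * Real.cos ((d - c) / 2))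
      ≤ μH[1] (geoCurve R '' Set.Icc c d) := by
  rcases le_or_gt (Real.cos ((d - c) / 2)) 0 with h | h
  · have : R * (d - c) * Real.cos ((d - c) / 2) ≤ 0 :=
      mul_nonpos_of_nonneg_of_nonpos (by nlinarith) h
    rw [ENNReal.ofReal_of_nonpos this]
    exact zero_le
  · have hlip := geoAngle_lipschitzOn R ((c + d) / 2) hR hcd hlen h
    have him := hlip.hausdorffMeasure_image_le (d := 1) zero_le_one
    have himg : geoAngle R ((c + d) / 2) '' (geoCurve R '' Set.Icc c d) = Set.Icc c d := by
      rw [← Set.image_comp]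
      have heq : Set.EqOn (geoAngle R ((c + d) / 2) ∘ geoCurve R) id (Set.Icc c d) := by
        intro θ hθ
        simp only [Set.mem_Icc] at hθ
        simp only [Function.comp_apply, id_eq]
        apply geoAngle_geoCurve R _ θ hR
        rw [abs_le]; constructor <;> [linarith [hθ.1, hθ.2]; linarith [hθ.1, hθ.2]]
      rw [Set.image_congr heq, Set.image_id]
    rw [himg, MeasureTheory.hausdorffMeasure_real, Real.volume_Icc, ENNReal.rpow_one] at him
    have hK : ((1 / (R * Real.cos ((d - c) / 2))).toNNReal : ℝ≥0∞)
        = ENNReal.ofReal (1 / (R * Real.cos ((d - c) / 2))) := rfl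
    rw [hK] at him
    have hpos : 0 < R * Real.cos ((d - c) / 2) := by positivity
    have hone : ENNReal.ofReal (R * Real.cos ((d - c) / 2))
        * ENNReal.ofReal (1 / (R * Real.cos ((d - c) / 2))) = 1 := by
      rw [← ENNReal.ofReal_mul hpos.le, mul_one_div, div_self hpos.ne', ENNReal.ofReal_one]
    calc ENNReal.ofReal (R * (d - c) * Real.cos ((d - c) / 2))
        = ENNReal.ofReal (R * Real.cos ((d - c) / 2)) * ENNReal.ofReal (d - c) := by
          rw [← ENNReal.ofReal_mul hpos.le]; congr 1; ring
      _ ≤ ENNReal.ofReal (R * Real.cos ((d - c) / 2))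
            * (ENNReal.ofReal (1 / (R * Real.cos ((d - c) / 2)))
              * μH[1] (geoCurve R '' Set.Icc c d)) := mul_le_mul_right him _
      _ = ENNReal.ofReal (R * Real.cos ((d - c) / 2))
            * ENNReal.ofReal (1 / (R * Real.cos ((d - c) / 2)))
            * μH[1] (geoCurve R '' Set.Icc c d) := by rw [mul_assoc]
      _ = μH[1] (geoCurve R '' Set.Icc c d) := by rw [hone, one_mul]

lemma geoCurve_image_Ico (R : ℝ) (hR : 0 < R) {u v : ℝ} (huv : u ≤ v) (hlen : v - u ≤ π) :
    geoCurve R '' Set.Ico u v = (geoCurve R '' Set.Icc u v) \ {geoCurve R v} := by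
  have hinj := geoCurve_injOn R hR (a := u) (b := v) hlen
  ext x
  constructor
  · rintro ⟨θ, hθ, rfl⟩
    refine ⟨⟨θ, Set.Ico_subset_Icc_self hθ, rfl⟩, ?_⟩
    simp only [Set.mem_singleton_iff]
    intro he
    have := hinj (Set.Ico_subset_Icc_self hθ) (Set.right_mem_Icc.mpr huv) he
    exact absurd this (ne_of_lt hθ.2)
  · rintro ⟨⟨θ, hθ, rfl⟩, hne⟩
    refine ⟨θ, ⟨hθ.1, lt_of_le_of_ne hθ.2 ?_⟩, rfl⟩
    intro he
    exact hne (by rw [he]; exact rfl)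

lemma geoArcIco_measure_eq (R : ℝ) (hR : 0 < R) {u v : ℝ} (huv : u ≤ v) (hlen : v - u ≤ π) :
    μH[1] (geoCurve R '' Set.Ico u v) = μH[1] (geoCurve R '' Set.Icc u v) := by
  haveI := MeasureTheory.Measure.noAtoms_hausdorff (EuclideanSpace ℝ (Fin 3)) one_pos
  rw [geoCurve_image_Ico R hR huv hlen]
  have : μH[1] (geoCurve R '' Set.Icc u v)
      ≤ μH[1] ((geoCurve R '' Set.Icc u v) \ {geoCurve R v}) + μH[1] {geoCurve R v} := by
    refine le_trans (measure_mono ?_) (measure_union_le _ _)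
    intro x hx
    by_cases hx' : x = geoCurve R v
    · right; simp [hx']
    · left; exact ⟨hx, hx'⟩
  rw [measure_singleton, add_zero] at this
  exact le_antisymm (measure_mono Set.diff_subset) this

lemma geoCurve_image_measurable (R : ℝ) {u v : ℝ} :
    MeasurableSet (geoCurve R '' Set.Icc u v) :=
  ((isCompact_Icc.image (geoCurve_continuous R)).isClosed).measurableSet

lemma geoCurve_image_Ico_measurable (R : ℝ) (hR : 0 < R) {u v : ℝ} (huv : u ≤ v)
    (hlen : v - u ≤ π) : MeasurableSet (geoCurve R '' Set.Ico u v) := by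
  rw [geoCurve_image_Ico R hR huv hlen]
  exact (geoCurve_image_measurable R).diff (measurableSet_singleton _)

lemma geoArc_measure_s18 (R : ℝ) (hR : 0 < R) {c d : ℝ} (hcd : c ≤ d) (hlen : d - c ≤ π) :
    μH[1] (geoCurve R '' Set.Icc c d) = ENNReal.ofReal (R * (d - c)) := by
  refine le_antisymm (geoArc_measure_le R hR.le hcd) ?_
  -- lower bound via subdivision
  have key : ∀ n : ℕ, ENNReal.ofReal (R * (d - c) * Real.cos ((d - c) / (2 * (n + 1))))
      ≤ μH[1] (geoCurve R '' Set.Icc c d) := by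
    intro n
    set m : ℕ := n + 1 with hm
    have hm0 : 0 < (m : ℝ) := by positivity
    set h : ℝ := (d - c) / m with hh
    have hh0 : 0 ≤ h := div_nonneg (by linarith) hm0.le
    have hpt : ∀ i : ℕ, c + i * h ≤ c + (i + 1) * h := by
      intro i; nlinarith
    have hsub : ∀ i : ℕ, i < m → Set.Ico (c + i * h) (c + (i + 1) * h) ⊆ Set.Icc c d := by
      intro i hi x hx
      simp only [Set.mem_Ico] at hx
      simp only [Set.mem_Icc]
      have hi' : (i : ℝ) + 1 ≤ m := by exact_mod_cast hi
      constructor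
      · nlinarith
      · have : c + (i + 1) * h ≤ c + m * h := by nlinarith
        have hmh : c + m * h = d := by rw [hh]; field_simp; ring
        linarith [hx.2, this, hmh.le]
    have hlen' : ∀ i : ℕ, (c + (i + 1) * h) - (c + i * h) ≤ π := by
      intro i
      have : (c + (i + 1) * h) - (c + i * h) = h := by ring
      rw [this, hh]
      have : (d - c) / m ≤ d - c := by
        apply div_le_self (by linarith) (by exact_mod_cast Nat.one_le_iff_ne_zero.mpr (by omega))
      linarith
    have hdisj : (↑(Finset.range m) : Set ℕ).PairwiseDisjoint
        (fun i : ℕ => geoCurve R '' Set.Ico (c + i * h) (c + (i + 1) * h)) := by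
      intro i hi j hj hij
      simp only [Finset.coe_range, Set.mem_Iio] at hi hj
      apply Set.disjoint_left.mpr
      rintro x ⟨θ, hθ, rfl⟩ ⟨θ', hθ', he⟩
      have h1 := hsub i hi hθ
      have h2 := hsub j hj hθ'
      have := geoCurve_injOn R hR hlen h2 h1 he
      subst this
      simp only [Set.mem_Ico] at hθ hθ'
      rcases lt_or_gt_of_ne hij with hij' | hij'
      · have : (i : ℝ) + 1 ≤ (j : ℝ) := by exact_mod_cast hij'
        nlinarith [hθ.1, hθ'.2, hθ.2, hθ'.1]
      · have : (j : ℝ) + 1 ≤ (i : ℝ) := by exact_mod_cast hij'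
        nlinarith [hθ.1, hθ'.2, hθ.2, hθ'.1]
    have hmeas : ∀ i ∈ Finset.range m,
        MeasurableSet (geoCurve R '' Set.Ico (c + i * h) (c + (i + 1) * h)) := by
      intro i _
      exact geoCurve_image_Ico_measurable R hR (hpt i) (hlen' i)
    have hunion : (⋃ i ∈ Finset.range m, geoCurve R '' Set.Ico (c + i * h) (c + (i + 1) * h))
        ⊆ geoCurve R '' Set.Icc c d := by
      intro x hx
      simp only [Set.mem_iUnion] at hx
      obtain ⟨i, hi, hx⟩ := hx
      obtain ⟨θ, hθ, rfl⟩ := hx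
      exact ⟨θ, hsub i (Finset.mem_range.mp hi) hθ, rfl⟩
    have hsum := MeasureTheory.measure_biUnion_finset (μ := μH[1]) hdisj hmeas
    have hlow : ∀ i ∈ Finset.range m, ENNReal.ofReal (R * h * Real.cos (h / 2))
        ≤ μH[1] (geoCurve R '' Set.Ico (c + i * h) (c + (i + 1) * h)) := by
      intro i hi
      rw [geoArcIco_measure_eq R hR (hpt i) (hlen' i)]
      have hl := geoArc_lower R hR (hpt i) (hlen' i)
      rw [show (c + ((i:ℝ) + 1) * h) - (c + (i:ℝ) * h) = h from by ring] at hl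
      exact hl
    have hmne : (m:ℝ) ≠ 0 := ne_of_gt hm0
    have hexp : (m:ℝ) * (R * h * Real.cos (h / 2)) = R * (d - c) * Real.cos ((d - c) / (2 * m)) := by
      have h2 : h / 2 = (d - c) / (2 * m) := by rw [hh]; ring
      rw [h2, hh]
      field_simp
    have hcast : ((d - c) / (2 * ((n:ℝ) + 1))) = (d - c) / (2 * (m:ℝ)) := by
      rw [hm]; push_cast; ring
    rw [hcast]
    calc ENNReal.ofReal (R * (d - c) * Real.cos ((d - c) / (2 * m)))
        = ∑ _i ∈ Finset.range m, ENNReal.ofReal (R * h * Real.cos (h / 2)) := by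
          rw [Finset.sum_const, Finset.card_range, nsmul_eq_mul,
            ← ENNReal.ofReal_natCast, ← ENNReal.ofReal_mul (Nat.cast_nonneg m), hexp]
      _ ≤ ∑ i ∈ Finset.range m, μH[1] (geoCurve R '' Set.Ico (c + i * h) (c + (i + 1) * h)) :=
          Finset.sum_le_sum hlow
      _ = μH[1] (⋃ i ∈ Finset.range m, geoCurve R '' Set.Ico (c + i * h) (c + (i + 1) * h)) :=
          hsum.symm
      _ ≤ μH[1] (geoCurve R '' Set.Icc c d) := measure_mono hunion
  -- pass to the limit
  have htend : Filter.Tendsto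
      (fun n : ℕ => ENNReal.ofReal (R * (d - c) * Real.cos ((d - c) / (2 * (n + 1)))))
      Filter.atTop (nhds (ENNReal.ofReal (R * (d - c)))) := by
    apply (ENNReal.continuous_ofReal.tendsto _).comp
    have h1 : Filter.Tendsto (fun n : ℕ => (d - c) / (2 * ((n : ℝ) + 1))) Filter.atTop (nhds 0) := by
      apply Filter.Tendsto.div_atTop (tendsto_const_nhds)
      apply Filter.Tendsto.const_mul_atTop (by norm_num : (0:ℝ) < 2)
      exact Filter.tendsto_atTop_add_const_right _ 1 tendsto_natCast_atTop_atTop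
    have h2 : Filter.Tendsto (fun n : ℕ => Real.cos ((d - c) / (2 * ((n : ℝ) + 1))))
        Filter.atTop (nhds 1) := by
      have := (Real.continuous_cos.tendsto 0).comp h1
      simpa [Function.comp_def] using this
    have := h2.const_mul (R * (d - c))
    simpa [mul_assoc] using this
  exact le_of_tendsto htend (Filter.Eventually.of_forall (fun n => key n))

lemma geoArc_restrict_eq (R : ℝ) (hR : 0 < R) {a b : ℝ} (hab : a ≤ b) (hlen : b - a ≤ π) :
    μH[1].restrict (geoCurve R '' Set.Icc a b)
      = Measure.map (geoCurve R)
          ((ENNReal.ofReal R • volume).restrict (Set.Icc a b)) := by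
  set A := geoCurve R '' Set.Icc a b with hA_def
  have hA : MeasurableSet A := geoCurve_image_measurable R
  set ρ := geoAngle R ((a + b) / 2) with hρ_def
  have hρc : Continuous ρ := geoAngle_continuous R _
  have hinv : ∀ θ ∈ Set.Icc a b, ρ (geoCurve R θ) = θ := by
    intro θ hθ
    simp only [Set.mem_Icc] at hθ
    apply geoAngle_geoCurve R _ θ hR
    rw [abs_le]; constructor <;> linarith [hθ.1, hθ.2]
  have hpre : ∀ S : Set ℝ, (ρ ⁻¹' S) ∩ A = geoCurve R '' (S ∩ Set.Icc a b) := by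
    intro S
    ext x
    constructor
    · rintro ⟨hS, θ, hθ, rfl⟩
      rw [Set.mem_preimage, hinv θ hθ] at hS
      exact ⟨θ, ⟨hS, hθ⟩, rfl⟩
    · rintro ⟨θ, ⟨hθS, hθ⟩, rfl⟩
      exact ⟨by rwa [Set.mem_preimage, hinv θ hθ], θ, hθ, rfl⟩
  haveI : IsFiniteMeasure (μH[1].restrict A) := by
    constructor
    rw [Measure.restrict_apply_univ, hA_def, geoArc_measure_s18 R hR hab hlen]
    exact ENNReal.ofReal_lt_top
  set lam := Measure.map ρ (μH[1].restrict A) with hlam_def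
  haveI : IsFiniteMeasure lam := by
    constructor
    rw [hlam_def, Measure.map_apply hρc.measurable MeasurableSet.univ]
    exact lt_of_le_of_lt (measure_mono (Set.subset_univ _)) (measure_lt_top _ _)
  have hIco : ∀ u v : ℝ, μH[1] (geoCurve R '' (Set.Ico u v ∩ Set.Icc a b))
      = ENNReal.ofReal R * volume (Set.Ico u v ∩ Set.Icc a b) := by
    intro u v
    rcases le_or_gt v b with hvb | hvb
    · have hset : Set.Ico u v ∩ Set.Icc a b = Set.Ico (max u a) v := by
        ext x
        simp only [Set.mem_inter_iff, Set.mem_Ico, Set.mem_Icc, max_le_iff]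
        constructor
        · rintro ⟨⟨h1, h2⟩, h3, h4⟩; exact ⟨⟨h1, h3⟩, h2⟩
        · rintro ⟨⟨h1, h3⟩, h2⟩; exact ⟨⟨h1, h2⟩, h3, by linarith⟩
      rw [hset]
      rcases le_or_gt (max u a) v with huv | huv
      · have hl : v - max u a ≤ π := by
          have := le_max_right u a
          linarith [hvb, this, hlen]
        rw [geoArcIco_measure_eq R hR huv hl, geoArc_measure_s18 R hR huv hl,
          Real.volume_Ico, ← ENNReal.ofReal_mul hR.le]
      · rw [Set.Ico_eq_empty (not_lt.mpr huv.le), Set.image_empty, measure_empty,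
          measure_empty, mul_zero]
    · have hset : Set.Ico u v ∩ Set.Icc a b = Set.Icc (max u a) b := by
        ext x
        simp only [Set.mem_inter_iff, Set.mem_Ico, Set.mem_Icc, max_le_iff]
        constructor
        · rintro ⟨⟨h1, h2⟩, h3, h4⟩; exact ⟨⟨h1, h3⟩, h4⟩
        · rintro ⟨⟨h1, h3⟩, h4⟩; exact ⟨⟨h1, by linarith⟩, h3, h4⟩
      rw [hset]
      rcases le_or_gt (max u a) b with hub | hub
      · have hl : b - max u a ≤ π := by
          have := le_max_right u a
          linarith [this, hlen]
        rw [geoArc_measure_s18 R hR hub hl, Real.volume_Icc, ← ENNReal.ofReal_mul hR.le]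
      · rw [Set.Icc_eq_empty (not_le.mpr hub), Set.image_empty, measure_empty,
          measure_empty, mul_zero]
  have hlam : lam = (ENNReal.ofReal R • volume).restrict (Set.Icc a b) := by
    refine Measure.ext_of_Ico lam _ (fun u v huv => ?_)
    rw [hlam_def, Measure.map_apply hρc.measurable measurableSet_Ico,
      Measure.restrict_apply (hρc.measurable measurableSet_Ico), hpre,
      Measure.restrict_apply measurableSet_Ico, Measure.smul_apply, smul_eq_mul]
    exact hIco u v
  have hmap : Measure.map (geoCurve R) lam = μH[1].restrict A := by
    rw [hlam_def,
      Measure.map_map (geoCurve_continuous R).measurable hρc.measurable]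
    have hae : (geoCurve R) ∘ ρ =ᵐ[μH[1].restrict A] id := by
      filter_upwards [MeasureTheory.ae_restrict_mem hA] with x hx
      obtain ⟨θ, hθ, rfl⟩ := hx
      simp only [Function.comp_apply, id_eq, hinv θ hθ]
    rw [Measure.map_congr hae, Measure.map_id]
  rw [← hmap, hlam]

lemma geoArc_setIntegral (R : ℝ) (hR : 0 < R) {a b : ℝ} (hab : a ≤ b) (hlen : b - a ≤ π)
    {S : Set (EuclideanSpace ℝ (Fin 3))} (hS : MeasurableSet S)
    (hSA : S ⊆ geoCurve R '' Set.Icc a b) (g : EuclideanSpace ℝ (Fin 3) → ℝ)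
    (hg : Continuous g) :
    ∫ x in S, g x ∂(μH[1])
      = R * ∫ θ in (geoCurve R ⁻¹' S) ∩ Set.Icc a b, g (geoCurve R θ) := by
  have hA : MeasurableSet (geoCurve R '' Set.Icc a b) := geoCurve_image_measurable R
  have h1 : μH[1].restrict S = (μH[1].restrict (geoCurve R '' Set.Icc a b)).restrict S := by
    rw [Measure.restrict_restrict hS, Set.inter_eq_self_of_subset_left hSA]
  rw [show (∫ x in S, g x ∂(μH[1]))
      = ∫ x, g x ∂((μH[1].restrict (geoCurve R '' Set.Icc a b)).restrict S) from by rw [← h1]]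
  rw [geoArc_restrict_eq R hR hab hlen,
    Measure.restrict_map (geoCurve_continuous R).measurable hS]
  rw [MeasureTheory.integral_map (geoCurve_continuous R).measurable.aemeasurable
    (hg.aestronglyMeasurable)]
  rw [Measure.restrict_restrict ((geoCurve_continuous R).measurable hS),
    Measure.restrict_smul]
  rw [MeasureTheory.integral_smul_measure]
  rw [ENNReal.toReal_ofReal hR.le]
  rfl

set_option maxHeartbeats 1000000 in
/-- Change of variables for the GEO interference integral in Lemma 4: with
`v₁ = 4·R_G²·r_E²·cos² φ`, `v₂ = R_G² + r_E²`, `R_G·cos φ > r_E`,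
`r_min^G(φ) = √((R_G − r_E cos φ)² + r_E² sin² φ) ≤ r₀ ≤ r_vis,max^G = √(a_G² + 2·a_G·r_E)`,
and `f` continuous, the integral of `f(‖x − t‖)` over the visible points of the
geostationary orbit at distance at least `r₀` (w.r.t. the 1-dimensional Hausdorff measure)
equals `∫_{r₀}^{r_vis,max^G} f(r)·4·r·R_G/√(v₁ − (v₂ − r²)²) dr`. -/
theorem geo_interference_change_of_variables
    (r_E a_G φ : ℝ) (hr : 0 < r_E) (ha : 0 < a_G)
    (hφ : φ ∈ Set.Ioo (-(π / 2)) (π / 2))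
    (R_G : ℝ) (hR : R_G = r_E + a_G)
    (hvis : R_G * Real.cos φ > r_E)
    (C_G : Set (EuclideanSpace ℝ (Fin 3)))
    (hC : C_G = {x : EuclideanSpace ℝ (Fin 3) | ‖x‖ = R_G ∧ x 2 = 0})
    (t : EuclideanSpace ℝ (Fin 3))
    (ht : t = ![r_E * Real.cos φ, 0, r_E * Real.sin φ])
    (v₁ v₂ : ℝ)
    (hv₁ : v₁ = 4 * R_G ^ 2 * r_E ^ 2 * Real.cos φ ^ 2)
    (hv₂ : v₂ = R_G ^ 2 + r_E ^ 2)
    (r₀ : ℝ)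
    (hr₀l : Real.sqrt ((R_G - r_E * Real.cos φ) ^ 2 + r_E ^ 2 * Real.sin φ ^ 2) ≤ r₀)
    (hr₀u : r₀ ≤ Real.sqrt (a_G ^ 2 + 2 * a_G * r_E))
    (f : ℝ → ℝ) (hf : Continuous f) :
    ∫ x in {x ∈ C_G | ⟪x - t, t⟫ ≥ 0 ∧ ‖x - t‖ ≥ r₀}, f ‖x - t‖ ∂(μH[1])
      = ∫ r in r₀..Real.sqrt (a_G ^ 2 + 2 * a_G * r_E),
          f r * (4 * r * R_G / Real.sqrt (v₁ - (v₂ - r ^ 2) ^ 2)) := by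
  -- basic positivity facts
  have hπ := Real.pi_pos
  have hcosφ : 0 < Real.cos φ := Real.cos_pos_of_mem_Ioo ⟨hφ.1, hφ.2⟩
  have hRpos : 0 < R_G := by rw [hR]; linarith
  set K : ℝ := R_G * r_E * Real.cos φ with hK_def
  have hKpos : 0 < K := by positivity
  set rmax : ℝ := Real.sqrt (a_G ^ 2 + 2 * a_G * r_E) with hrmax_def
  have hrmax2 : rmax ^ 2 = R_G ^ 2 - r_E ^ 2 := by
    rw [hrmax_def, Real.sq_sqrt (by positivity), hR]; ring
  have hrmax0 : 0 ≤ rmax := Real.sqrt_nonneg _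
  have hr₀0 : 0 ≤ r₀ := le_trans (Real.sqrt_nonneg _) hr₀l
  have hrmin2 : (R_G - r_E * Real.cos φ) ^ 2 + r_E ^ 2 * Real.sin φ ^ 2 = v₂ - 2 * K := by
    have h2 := Real.sin_sq_add_cos_sq φ
    rw [hv₂, hK_def]
    linear_combination r_E ^ 2 * h2
  have hr₀sq_le : r₀ ^ 2 ≤ R_G ^ 2 - r_E ^ 2 := by
    rw [← hrmax2]
    exact pow_le_pow_left₀ hr₀0 hr₀u 2
  have hr₀sq_ge : v₂ - 2 * K ≤ r₀ ^ 2 := by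
    rw [← hrmin2]
    have hnn : (0:ℝ) ≤ (R_G - r_E * Real.cos φ) ^ 2 + r_E ^ 2 * Real.sin φ ^ 2 := by positivity
    rw [← Real.sq_sqrt hnn]
    exact pow_le_pow_left₀ (Real.sqrt_nonneg _) hr₀l 2
  -- angles
  set c₁ : ℝ := r_E / (R_G * Real.cos φ) with hc₁_def
  set c₀ : ℝ := (v₂ - r₀ ^ 2) / (2 * K) with hc₀_def
  have hc₁pos : 0 < c₁ := by rw [hc₁_def]; positivity
  have hc₁lt1 : c₁ < 1 := by
    rw [hc₁_def, div_lt_one (by positivity)]; exact hvis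
  have hKc₀ : 2 * K * c₀ = v₂ - r₀ ^ 2 := by
    rw [hc₀_def]; field_simp
  have hKc₁ : 2 * K * c₁ = 2 * r_E ^ 2 := by
    rw [hc₁_def, hK_def]; field_simp
  have hc₀le1 : c₀ ≤ 1 := by
    rw [hc₀_def, div_le_one (by positivity)]; linarith
  have hc₁lec₀ : c₁ ≤ c₀ := by
    rw [hc₁_def, hc₀_def, div_le_div_iff₀ (by positivity) (by positivity), hK_def, hv₂]
    have h1 : 2 * r_E ^ 2 ≤ R_G ^ 2 + r_E ^ 2 - r₀ ^ 2 := by linarith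
    calc r_E * (2 * (R_G * r_E * Real.cos φ)) = 2 * r_E ^ 2 * (R_G * Real.cos φ) := by ring
      _ ≤ (R_G ^ 2 + r_E ^ 2 - r₀ ^ 2) * (R_G * Real.cos φ) :=
          mul_le_mul_of_nonneg_right h1 (by positivity)
  have harccos_anti : ∀ x y : ℝ, x ≤ y → Real.arccos y ≤ Real.arccos x := by
    intro x y hxy
    rw [Real.arccos_eq_pi_div_two_sub_arcsin, Real.arccos_eq_pi_div_two_sub_arcsin]
    linarith [Real.monotone_arcsin hxy]
  set θa : ℝ := Real.arccos c₀ with hθa_def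
  set θb : ℝ := Real.arccos c₁ with hθb_def
  have hθa0 : 0 ≤ θa := Real.arccos_nonneg _
  have hθb0 : 0 ≤ θb := Real.arccos_nonneg _
  have hθab : θa ≤ θb := harccos_anti _ _ hc₁lec₀
  have hθb2 : θb < π / 2 := Real.arccos_lt_pi_div_two.mpr hc₁pos
  have hcosθa : Real.cos θa = c₀ := Real.cos_arccos (by linarith) hc₀le1
  have hcosθb : Real.cos θb = c₁ := Real.cos_arccos (by linarith) (le_of_lt hc₁lt1)
  -- norm and inner product formulas
  have ht0 : t 0 = r_E * Real.cos φ := by rw [ht]; rfl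
  have ht1 : t 1 = 0 := by rw [ht]; rfl
  have ht2 : t 2 = r_E * Real.sin φ := by rw [ht]; rfl
  have hnorm : ∀ θ : ℝ, ‖geoCurve R_G θ - t‖ = Real.sqrt (v₂ - 2 * K * Real.cos θ) := by
    intro θ
    rw [euclidean_norm_sub, geoCurve_apply0, geoCurve_apply1, geoCurve_apply2, ht0, ht1, ht2]
    congr 1
    have h1 := Real.sin_sq_add_cos_sq θ
    have h2 := Real.sin_sq_add_cos_sq φ
    rw [hv₂, hK_def]
    linear_combination R_G ^ 2 * h1 + r_E ^ 2 * h2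
  have hinner : ∀ θ : ℝ, ⟪geoCurve R_G θ - t, t⟫ = K * Real.cos θ - r_E ^ 2 := by
    intro θ
    rw [euclidean_inner_sub, geoCurve_apply0, geoCurve_apply1, geoCurve_apply2, ht0, ht1, ht2]
    have h2 := Real.sin_sq_add_cos_sq φ
    rw [hK_def]
    linear_combination (-(r_E ^ 2)) * h2
  have hR_gt : 0 < R_G - r_E * Real.cos φ := by
    have h4 : r_E * Real.cos φ ≤ r_E := mul_le_of_le_one_right hr.le (Real.cos_le_one φ)
    rw [hR]; linarith
  have hupos : ∀ θ : ℝ, 0 < v₂ - 2 * K * Real.cos θ := by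
    intro θ
    have hc1 : 2 * K * Real.cos θ ≤ 2 * K := by
      have := mul_le_mul_of_nonneg_left (Real.cos_le_one θ) (by positivity : (0:ℝ) ≤ 2 * K)
      linarith [this]
    have h5 : 0 < (R_G - r_E * Real.cos φ) ^ 2 := pow_pos hR_gt 2
    have h6 : (0:ℝ) ≤ r_E ^ 2 * Real.sin φ ^ 2 := by positivity
    linarith [hrmin2]
  -- the set equals the image of two arcs
  set T : Set ℝ := Set.Icc (-θb) (-θa) ∪ Set.Icc θa θb with hT_def
  have hcurve_norm : ∀ θ : ℝ, ‖geoCurve R_G θ‖ = R_G := by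
    intro θ
    rw [euclidean_norm_eq, geoCurve_apply0, geoCurve_apply1, geoCurve_apply2]
    have h1 := Real.sin_sq_add_cos_sq θ
    have : (R_G * Real.cos θ) ^ 2 + (R_G * Real.sin θ) ^ 2 + 0 ^ 2 = R_G ^ 2 := by
      linear_combination R_G ^ 2 * h1
    rw [this]
    exact Real.sqrt_sq hRpos.le
  have hcosT : ∀ θ ∈ T, c₁ ≤ Real.cos θ ∧ Real.cos θ ≤ c₀ := by
    intro θ hθ
    have habs : θa ≤ |θ| ∧ |θ| ≤ θb := by
      rcases hθ with h | h
      · rw [Set.mem_Icc] at h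
        rw [abs_of_nonpos (by linarith)]
        exact ⟨by linarith, by linarith⟩
      · rw [Set.mem_Icc] at h
        rw [abs_of_nonneg (by linarith)]
        exact ⟨h.1, h.2⟩
    have hc : Real.cos θ = Real.cos |θ| := (Real.cos_abs θ).symm
    constructor
    · rw [hc, ← hcosθb]
      exact Real.cos_le_cos_of_nonneg_of_le_pi (abs_nonneg θ) (by linarith) habs.2
    · rw [hc, ← hcosθa]
      exact Real.cos_le_cos_of_nonneg_of_le_pi hθa0 (by linarith [abs_nonneg θ]) habs.1
  have hSeq : {x ∈ C_G | ⟪x - t, t⟫ ≥ 0 ∧ ‖x - t‖ ≥ r₀} = geoCurve R_G '' T := by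
    ext x
    simp only [Set.mem_setOf_eq, Set.mem_image]
    constructor
    · rintro ⟨hxC, hip, hnr⟩
      rw [hC] at hxC
      obtain ⟨hxn, hx2⟩ := hxC
      have hsum : (x 0) ^ 2 + (x 1) ^ 2 = R_G ^ 2 := by
        have h1 : ((x 0) ^ 2 + (x 1) ^ 2 + (x 2) ^ 2 : ℝ) = R_G ^ 2 := by
          have h2 := euclidean_norm_eq x
          rw [hxn] at h2
          have h3 : (0:ℝ) ≤ (x 0) ^ 2 + (x 1) ^ 2 + (x 2) ^ 2 := by positivity
          rw [← Real.sq_sqrt h3, ← h2]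
        rw [hx2] at h1
        linarith [h1]
      set z : ℂ := ⟨x 0, x 1⟩ with hz_def
      have hzabs : ‖z‖ = R_G := by
        rw [Complex.norm_def, Complex.normSq_mk]
        rw [show x 0 * x 0 + x 1 * x 1 = (x 0) ^ 2 + (x 1) ^ 2 by ring, hsum]
        exact Real.sqrt_sq hRpos.le
      have hzne : z ≠ 0 := by
        intro h0
        rw [h0] at hzabs
        simp at hzabs
        exact absurd hzabs.symm hRpos.ne'
      set θ : ℝ := Complex.arg z with hθ_def
      have hcosθ : Real.cos θ = x 0 / R_G := by
        rw [hθ_def, Complex.cos_arg hzne, hzabs]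
      have hsinθ : Real.sin θ = x 1 / R_G := by
        rw [hθ_def, Complex.sin_arg, hzabs]
      have hx0 : x 0 = R_G * Real.cos θ := by rw [hcosθ]; field_simp
      have hx1 : x 1 = R_G * Real.sin θ := by rw [hsinθ]; field_simp
      have hxeq : x = geoCurve R_G θ := by
        ext i
        fin_cases i
        · exact hx0
        · exact hx1
        · exact hx2
      rw [hxeq, hinner θ] at hip
      rw [hxeq, hnorm θ] at hnr
      have hcos1 : c₁ ≤ Real.cos θ := by
        have h1 : r_E ^ 2 ≤ K * Real.cos θ := by linarith [hip]
        have h2 : K * c₁ ≤ K * Real.cos θ := by linarith [hKc₁]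
        exact le_of_mul_le_mul_left h2 hKpos
      have hcos0 : Real.cos θ ≤ c₀ := by
        have h1 : r₀ ^ 2 ≤ v₂ - 2 * K * Real.cos θ := by
          rw [← Real.sq_sqrt (hupos θ).le]
          exact pow_le_pow_left₀ hr₀0 hnr 2
        have h2 : 2 * K * Real.cos θ ≤ 2 * K * c₀ := by linarith [hKc₀]
        have h3 : K * Real.cos θ ≤ K * c₀ := by linarith
        exact le_of_mul_le_mul_left h3 hKpos
      have hθrange := Complex.arg_mem_Ioc z
      rw [← hθ_def] at hθrange
      have hθle : |θ| ≤ π := by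
        rw [abs_le]
        exact ⟨le_of_lt hθrange.1, hθrange.2⟩
      have habs1 : |θ| ≤ θb := by
        rw [← Real.arccos_cos (abs_nonneg θ) hθle]
        apply harccos_anti
        rw [Real.cos_abs]
        exact hcos1
      have habs0 : θa ≤ |θ| := by
        rw [← Real.arccos_cos (abs_nonneg θ) hθle]
        apply harccos_anti
        rw [Real.cos_abs]
        exact hcos0
      refine ⟨θ, ?_, hxeq.symm⟩
      rcases le_or_gt 0 θ with hθ0 | hθ0
      · right
        rw [abs_of_nonneg hθ0] at habs0 habs1
        exact ⟨habs0, habs1⟩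
      · left
        rw [abs_of_neg hθ0] at habs0 habs1
        rw [Set.mem_Icc]
        exact ⟨by linarith, by linarith⟩
    · rintro ⟨θ, hθT, rfl⟩
      obtain ⟨hc1, hc0⟩ := hcosT θ hθT
      refine ⟨?_, ?_, ?_⟩
      · rw [hC]
        exact ⟨hcurve_norm θ, rfl⟩
      · rw [hinner θ]
        have h2 : 2 * K * c₁ ≤ 2 * K * Real.cos θ := by
          have := mul_le_mul_of_nonneg_left hc1 (by positivity : (0:ℝ) ≤ 2 * K)
          linarith [this]
        rw [ge_iff_le]
        linarith [hKc₁]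
      · rw [hnorm θ, ge_iff_le]
        have h2 : 2 * K * Real.cos θ ≤ 2 * K * c₀ := by
          have := mul_le_mul_of_nonneg_left hc0 (by positivity : (0:ℝ) ≤ 2 * K)
          linarith [this]
        rw [Real.le_sqrt hr₀0 (hupos θ).le]
        linarith [hKc₀]
  -- Final assembly
  have hθble : θb ≤ π / 2 := hθb2.le
  have hTsub : T ⊆ Set.Icc (-θb) θb := by
    rintro θ (h | h) <;> rw [Set.mem_Icc] at h ⊢ <;>
      exact ⟨by linarith [h.1, h.2], by linarith [h.1, h.2]⟩
  have hTcompact : IsCompact T := isCompact_Icc.union isCompact_Icc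
  have hS : MeasurableSet (geoCurve R_G '' T) :=
    ((hTcompact.image (geoCurve_continuous R_G)).isClosed).measurableSet
  have hSA : geoCurve R_G '' T ⊆ geoCurve R_G '' Set.Icc (-θb) θb := Set.image_mono hTsub
  rw [hSeq, geoArc_setIntegral R_G hRpos (by linarith : -θb ≤ θb)
    (by linarith : θb - -θb ≤ π) hS hSA
    (fun x => f ‖x - t‖) (hf.comp ((continuous_id.sub continuous_const).norm))]
  have hpre : (geoCurve R_G ⁻¹' (geoCurve R_G '' T)) ∩ Set.Icc (-θb) θb = T := by
    apply Set.Subset.antisymm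
    · rintro θ ⟨hθ1, hθ2⟩
      obtain ⟨θ', hθ'T, he⟩ := hθ1
      have heq := geoCurve_injOn R_G hRpos (a := -θb) (b := θb)
        (by linarith) (hTsub hθ'T) hθ2 he
      rwa [← heq]
    · intro θ hθ
      exact ⟨⟨θ, hθ, rfl⟩, hTsub hθ⟩
  rw [hpre]
  simp only [hnorm]
  -- split the two arcs
  have hFc : Continuous fun θ : ℝ => f (Real.sqrt (v₂ - 2 * K * Real.cos θ)) :=
    hf.comp (Real.continuous_sqrt.comp (by fun_prop))
  have hdisj2 : Disjoint (Set.Ico (-θb) (-θa)) (Set.Icc θa θb) := by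
    apply Set.disjoint_left.mpr
    rintro θ h1 h2
    rw [Set.mem_Ico] at h1
    rw [Set.mem_Icc] at h2
    linarith [h1.2, h2.1]
  have hTae : T =ᵐ[volume] ((Set.Ico (-θb) (-θa) ∪ Set.Icc θa θb : Set ℝ)) := by
    have hsub1 : (Set.Ico (-θb) (-θa) ∪ Set.Icc θa θb) ⊆ T :=
      Set.union_subset_union Set.Ico_subset_Icc_self subset_rfl
    have hsub2 : T \ (Set.Ico (-θb) (-θa) ∪ Set.Icc θa θb) ⊆ ({-θa} : Set ℝ) := by
      rintro θ ⟨hθT, hθn⟩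
      rcases hθT with h | h
      · rw [Set.mem_Icc] at h
        have h5 : ¬ θ < -θa := fun hlt => hθn (Or.inl ⟨h.1, hlt⟩)
        have h6 : θ = -θa := le_antisymm h.2 (not_lt.mp h5)
        simp [h6]
      · exact absurd (Or.inr h) hθn
    apply MeasureTheory.ae_eq_set.mpr
    constructor
    · exact measure_mono_null hsub2 (measure_singleton _)
    · exact measure_mono_null (fun x hx => (hx.2 (hsub1 hx.1)).elim)
        (measure_singleton (-θa))
  rw [setIntegral_congr_set hTae,
    MeasureTheory.setIntegral_union hdisj2 measurableSet_Icc
      (hFc.integrableOn_Icc.mono_set Set.Ico_subset_Icc_self) hFc.integrableOn_Icc]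
  have hIccInt : ∀ u v : ℝ, u ≤ v →
      (∫ θ in Set.Icc u v, f (Real.sqrt (v₂ - 2 * K * Real.cos θ)))
        = ∫ θ in u..v, f (Real.sqrt (v₂ - 2 * K * Real.cos θ)) := by
    intro u v huv
    rw [intervalIntegral.integral_of_le huv]
    exact (setIntegral_congr_set MeasureTheory.Ioc_ae_eq_Icc).symm
  have hreflect : (∫ θ in (-θb)..(-θa), f (Real.sqrt (v₂ - 2 * K * Real.cos θ)))
      = ∫ θ in θa..θb, f (Real.sqrt (v₂ - 2 * K * Real.cos θ)) := by
    have h := intervalIntegral.integral_comp_neg (a := θa) (b := θb)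
      (f := fun θ => f (Real.sqrt (v₂ - 2 * K * Real.cos θ)))
    rw [← h]
    simp only [Real.cos_neg]
  have hIco_eq : (∫ θ in Set.Ico (-θb) (-θa), f (Real.sqrt (v₂ - 2 * K * Real.cos θ)))
      = ∫ θ in Set.Icc θa θb, f (Real.sqrt (v₂ - 2 * K * Real.cos θ)) := by
    rw [setIntegral_congr_set MeasureTheory.Ico_ae_eq_Icc,
      hIccInt (-θb) (-θa) (by linarith), hreflect, ← hIccInt θa θb hθab]
  rw [hIco_eq]
  -- change of variables on the right-hand side
  rw [intervalIntegral.integral_of_le hr₀u]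
  have hderiv : ∀ θ ∈ Set.Ioc θa θb,
      HasDerivWithinAt (fun ψ => Real.sqrt (v₂ - 2 * K * Real.cos ψ))
        (K * Real.sin θ / Real.sqrt (v₂ - 2 * K * Real.cos θ)) (Set.Ioc θa θb) θ := by
    intro θ hθ
    have hu := hupos θ
    have h1 : HasDerivAt (fun ψ : ℝ => v₂ - 2 * K * Real.cos ψ) (2 * K * Real.sin θ) θ := by
      have h2 := (Real.hasDerivAt_cos θ).const_mul (2 * K)
      have h3 := h2.const_sub v₂
      rw [show (2 * K * Real.sin θ) = -(2 * K * -Real.sin θ) by ring]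
      exact h3
    have h4 := (Real.hasDerivAt_sqrt hu.ne').comp θ h1
    have h5 : 1 / (2 * Real.sqrt (v₂ - 2 * K * Real.cos θ)) * (2 * K * Real.sin θ)
        = K * Real.sin θ / Real.sqrt (v₂ - 2 * K * Real.cos θ) := by
      have hsq := Real.sqrt_pos.mpr hu
      field_simp
    exact (h5 ▸ h4).hasDerivWithinAt
  have hmono : StrictMonoOn (fun θ => Real.sqrt (v₂ - 2 * K * Real.cos θ)) (Set.Icc θa θb) := by
    intro x hx y hy hxy
    rw [Set.mem_Icc] at hx hy
    have hcos : Real.cos y < Real.cos x :=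
      Real.cos_lt_cos_of_nonneg_of_le_pi (by linarith [hx.1]) (by linarith [hy.2]) hxy
    apply Real.sqrt_lt_sqrt (hupos x).le
    have h7 := mul_lt_mul_of_pos_left hcos (by positivity : (0:ℝ) < 2 * K)
    linarith [h7]
  have hinj : Set.InjOn (fun θ => Real.sqrt (v₂ - 2 * K * Real.cos θ)) (Set.Ioc θa θb) :=
    (hmono.mono Set.Ioc_subset_Icc_self).injOn
  have hfa : Real.sqrt (v₂ - 2 * K * Real.cos θa) = r₀ := by
    rw [hcosθa, show v₂ - 2 * K * c₀ = r₀ ^ 2 by linarith [hKc₀]]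
    exact Real.sqrt_sq hr₀0
  have hfb : Real.sqrt (v₂ - 2 * K * Real.cos θb) = rmax := by
    rw [hcosθb, show v₂ - 2 * K * c₁ = rmax ^ 2 by rw [hrmax2, hv₂]; linarith [hKc₁]]
    exact Real.sqrt_sq hrmax0
  have himg : (fun θ => Real.sqrt (v₂ - 2 * K * Real.cos θ)) '' Set.Ioc θa θb
      = Set.Ioc r₀ rmax := by
    apply Set.Subset.antisymm
    · rintro r ⟨θ, hθ, rfl⟩
      rw [Set.mem_Ioc] at hθ
      constructor
      · rw [← hfa]
        exact hmono ⟨le_refl θa, hθab⟩ ⟨by linarith [hθ.1], hθ.2⟩ hθ.1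
      · rw [← hfb]
        exact (hmono.monotoneOn) ⟨by linarith [hθ.1], hθ.2⟩ ⟨hθab, le_refl θb⟩ hθ.2
    · rintro r ⟨hr1, hr2⟩
      set zc : ℝ := (v₂ - r ^ 2) / (2 * K) with hzc_def
      have hr0pos : 0 ≤ r := le_trans hr₀0 hr1.le
      have hrsq : r ^ 2 ≤ rmax ^ 2 := pow_le_pow_left₀ hr0pos hr2 2
      have hz1 : c₁ ≤ zc := by
        rw [hzc_def, le_div_iff₀ (by positivity)]
        rw [hrmax2] at hrsq
        linarith [hKc₁, hrsq, hv₂.le, hv₂.ge]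
      have hzq : r₀ ^ 2 < r ^ 2 := by
        exact pow_lt_pow_left₀ hr1 hr₀0 (by norm_num)
      have hz0 : zc < c₀ := by
        rw [hzc_def, hc₀_def, div_lt_div_iff₀ (by positivity) (by positivity)]
        have h8 : v₂ - r ^ 2 < v₂ - r₀ ^ 2 := by linarith
        exact mul_lt_mul_of_pos_right h8 (by positivity)
      have hzmem1 : -1 ≤ zc := by linarith [hc₁pos]
      have hzmem2 : zc ≤ 1 := by linarith [hc₀le1]
      refine ⟨Real.arccos zc, ?_, ?_⟩
      · rw [Set.mem_Ioc]
        constructor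
        · rw [hθa_def]
          exact Real.strictAntiOn_arccos ⟨hzmem1, hzmem2⟩
            ⟨by linarith [hc₁pos, hc₁lec₀], hc₀le1⟩ hz0
        · rw [hθb_def]
          exact harccos_anti _ _ hz1
      · show Real.sqrt (v₂ - 2 * K * Real.cos (Real.arccos zc)) = r
        rw [Real.cos_arccos hzmem1 hzmem2, hzc_def,
          show v₂ - 2 * K * ((v₂ - r ^ 2) / (2 * K)) = r ^ 2 by field_simp; ring]
        exact Real.sqrt_sq hr0pos
  rw [← himg,
    MeasureTheory.integral_image_eq_integral_abs_deriv_smul measurableSet_Ioc hderiv hinj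
      (fun r => f r * (4 * r * R_G / Real.sqrt (v₁ - (v₂ - r ^ 2) ^ 2)))]
  have hpoint : Set.EqOn
      (fun θ => |K * Real.sin θ / Real.sqrt (v₂ - 2 * K * Real.cos θ)| •
        (f (Real.sqrt (v₂ - 2 * K * Real.cos θ)) *
          (4 * Real.sqrt (v₂ - 2 * K * Real.cos θ) * R_G /
            Real.sqrt (v₁ - (v₂ - Real.sqrt (v₂ - 2 * K * Real.cos θ) ^ 2) ^ 2))))
      (fun θ => 2 * R_G * f (Real.sqrt (v₂ - 2 * K * Real.cos θ)))
      (Set.Ioc θa θb) := by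
    intro θ hθ
    rw [Set.mem_Ioc] at hθ
    have hsinpos : 0 < Real.sin θ :=
      Real.sin_pos_of_pos_of_lt_pi (lt_of_le_of_lt hθa0 hθ.1) (by linarith)
    have hus := hupos θ
    have hsq : 0 < Real.sqrt (v₂ - 2 * K * Real.cos θ) := Real.sqrt_pos.mpr hus
    simp only
    rw [Real.sq_sqrt hus.le,
      show v₂ - (v₂ - 2 * K * Real.cos θ) = 2 * K * Real.cos θ by ring]
    have hsin2 : v₁ - (2 * K * Real.cos θ) ^ 2 = (2 * K * Real.sin θ) ^ 2 := by
      have h1 := Real.sin_sq_add_cos_sq θ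
      rw [hv₁, hK_def]
      linear_combination (-(4 * (R_G * r_E * Real.cos φ) ^ 2)) * h1
    rw [hsin2, Real.sqrt_sq (by positivity), abs_of_pos (by positivity), smul_eq_mul]
    field_simp
    have hne : Real.sqrt (v₂ - K * 2 * Real.cos θ) ≠ 0 := by
      rw [show v₂ - K * 2 * Real.cos θ = v₂ - 2 * K * Real.cos θ by ring]; exact hsq.ne'
    rw [div_eq_iff hne]
    ring
  rw [MeasureTheory.setIntegral_congr_fun measurableSet_Ioc hpoint,
    MeasureTheory.integral_const_mul,
    setIntegral_congr_set MeasureTheory.Ioc_ae_eq_Icc]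
  ring
end
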